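/- arXiv:2107.06759 — 6 statements merged into one kernel-verified Lean document; each statement's English description precedes it below -/
import Mathlib

section
/- Let (A, λ_A) be an object of C_𝒪. Then depth A ≤ 1 ≤ dim A, where depth A is the depth of A as a module over itself and dim A is the Krull dimension of A. -/
open IsLocalRing CategoryTheory

noncomputable section

/-- The length of a module, defined as the Krull dimension of its lattice of submodules. -/
noncomputable def mLength (R M : Type) [Ring R] [AddCommGroup M] [Module R M] :
    WithBot ℕ∞ :=
  Order.krullDim (Submodule R M)

/-- The depth of a module over a local ring: the supremum of the lengths of
regular sequences on `M` consisting of elements of the maximal ideal. -/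
noncomputable def mDepth (A : Type) [CommRing A] [IsLocalRing A]
    (M : Type) [AddCommGroup M] [Module A M] : ℕ∞ :=
  sSup {n : ℕ∞ | ∃ rs : List A, (rs.length : ℕ∞) = n ∧
    (∀ x ∈ rs, x ∈ maximalIdeal A) ∧ RingTheory.Sequence.IsRegular M rs}

/-- The `𝒪`-module structure on an `A`-module killed by `ker lam`,
obtained through the isomorphism `A ⧸ ker lam ≃ 𝒪`. -/
noncomputable def oModule {𝒪 A : Type} [CommRing 𝒪] [CommRing A] (lam : A →+* 𝒪)
    (hs : Function.Surjective lam) (M : Type) [AddCommGroup M] [Module A M]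
    (h : Module.IsTorsionBySet A M (RingHom.ker lam : Set A)) : Module 𝒪 M :=
  letI := h.module
  Module.compHom M (RingHom.quotientKerEquivOfSurjective hs).symm.toRingHom

/-- The length over `𝒪` of an `A`-module killed by `ker lam`. -/
noncomputable def oLength {𝒪 A : Type} [CommRing 𝒪] [CommRing A] (lam : A →+* 𝒪)
    (hs : Function.Surjective lam) (M : Type) [AddCommGroup M] [Module A M]
    (h : Module.IsTorsionBySet A M (RingHom.ker lam : Set A)) : WithBot ℕ∞ :=
  letI := oModule lam hs M h
  mLength 𝒪 M

/-- `M` has finite length as an `𝒪`-module. -/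
def OFiniteLength {𝒪 A : Type} [CommRing 𝒪] [CommRing A] (lam : A →+* 𝒪)
    (hs : Function.Surjective lam) (M : Type) [AddCommGroup M] [Module A M]
    (h : Module.IsTorsionBySet A M (RingHom.ker lam : Set A)) : Prop :=
  letI := oModule lam hs M h
  IsFiniteLength 𝒪 M

/-- The rank over `𝒪` of an `A`-module killed by `ker lam`: the dimension over the
fraction field `K` of `𝒪` of the base change `K ⊗_𝒪 M`. -/
noncomputable def oRank {𝒪 A : Type} [CommRing 𝒪] [IsDomain 𝒪] [CommRing A] (lam : A →+* 𝒪)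
    (hs : Function.Surjective lam) (M : Type) [AddCommGroup M] [Module A M]
    (h : Module.IsTorsionBySet A M (RingHom.ker lam : Set A)) : Cardinal :=
  letI := oModule lam hs M h
  Module.rank (FractionRing 𝒪) (TensorProduct 𝒪 (FractionRing 𝒪) M)

lemma torsionBySet_torsion {A M : Type} [CommRing A] [AddCommGroup M] [Module A M]
    (s : Set A) : Module.IsTorsionBySet A (Submodule.torsionBySet A M s) s :=
  Submodule.torsionBySet_isTorsionBySet s

/-- The annihilator `A[J]` of an ideal `J` is killed by `J`. -/
lemma annihilator_torsion {A : Type} [CommRing A] (J : Ideal A) :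
    Module.IsTorsionBySet A (Submodule.annihilator J) (J : Set A) := by
  rintro ⟨x, hx⟩ ⟨a, ha⟩
  apply Subtype.ext
  have := (Submodule.mem_annihilator.mp hx) a ha
  simpa [smul_eq_mul, mul_comm] using this

lemma submodule_torsion {A M : Type} [CommRing A] [AddCommGroup M] [Module A M] {s : Set A}
    (h : Module.IsTorsionBySet A M s) (P : Submodule A M) :
    Module.IsTorsionBySet A P s := by
  rintro ⟨x, hx⟩ a
  apply Subtype.ext
  simpa using @h x a

lemma quotient_torsion {A M : Type} [CommRing A] [AddCommGroup M] [Module A M] {s : Set A}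
    (h : Module.IsTorsionBySet A M s) (P : Submodule A M) :
    Module.IsTorsionBySet A (M ⧸ P) s := by
  rintro x a
  obtain ⟨y, rfl⟩ := Submodule.Quotient.mk_surjective P x
  rw [← Submodule.Quotient.mk_smul, @h y a]
  rfl

lemma cotangent_torsion {A : Type} [CommRing A] {I : Ideal A} {s : Set A}
    (h : Module.IsTorsionBySet A I s) :
    Module.IsTorsionBySet A I.Cotangent s := by
  rintro x a
  obtain ⟨y, rfl⟩ := I.toCotangent_surjective x
  rw [← map_smul, @h y a, map_zero]

/-- The conormal module `I/I²` is killed by `I`. -/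
lemma conormal_torsion {A : Type} [CommRing A] (I : Ideal A) :
    Module.IsTorsionBySet A I.Cotangent (I : Set A) := by
  rintro x ⟨a, ha⟩
  obtain ⟨y, rfl⟩ := I.toCotangent_surjective x
  rw [← map_smul]
  refine (I.toCotangent_eq_zero _).mpr ?_
  have : ((a • y : I) : A) = a * (y : A) := rfl
  rw [this, pow_two]
  exact Ideal.mul_mem_mul ha y.2

/-- If `P` contains the `A[J]`-torsion of `M`, then `M ⧸ P` is killed by `J`;
in particular congruence modules `M/(M[𝔭] + M[I])` are killed by `𝔭`. -/
lemma quot_tors {A M : Type} [CommRing A] [AddCommGroup M] [Module A M] (J : Ideal A)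
    (P : Submodule A M)
    (hP : Submodule.torsionBySet A M ((Submodule.annihilator J : Ideal A) : Set A) ≤ P) :
    Module.IsTorsionBySet A (M ⧸ P) (J : Set A) := by
  rintro x ⟨a, ha⟩
  obtain ⟨y, rfl⟩ := Submodule.Quotient.mk_surjective P x
  rw [← Submodule.Quotient.mk_smul, Submodule.Quotient.mk_eq_zero]
  apply hP
  rw [Submodule.mem_torsionBySet_iff]
  rintro ⟨b, hb⟩
  have hba : b * a = 0 := (Submodule.mem_annihilator.mp hb) a ha
  calc b • a • y = (b * a) • y := (mul_smul b a y).symm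
  _ = 0 := by rw [hba, zero_smul]

/-- A commutative ring has finite self-injective dimension if `Ext^i(-, R)`
vanishes for all large `i`.  For a noetherian local ring this is
the Gorenstein condition. -/
def HasFiniteInjectiveDimension (A : Type) [CommRing A] : Prop :=
  ∃ n : ℕ, ∀ (M : ModuleCat A) (i : ℕ), n < i →
    Subsingleton (((Ext A (ModuleCat A) i).obj (Opposite.op M)).obj (ModuleCat.of A A))

/-- A noetherian local ring is regular if the dimension of its cotangent space
equals its Krull dimension. -/
def IsRegularLocal (R : Type) [CommRing R] [IsLocalRing R] [IsNoetherianRing R] : Prop :=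
  (Module.finrank (ResidueField R) (CotangentSpace R) : WithBot ℕ∞) = ringKrullDim R

/-- A noetherian local ring is a complete intersection if its completion at the
maximal ideal is isomorphic to a regular local ring modulo an ideal generated by a
regular sequence. -/
def IsCompleteIntersectionLocal (A : Type) [CommRing A] [IsLocalRing A] : Prop :=
  ∃ (R : Type) (_ : CommRing R) (_ : IsLocalRing R) (_ : IsNoetherianRing R) (rs : List R),
    IsRegularLocal R ∧ (∀ x ∈ rs, x ∈ maximalIdeal R) ∧
    RingTheory.Sequence.IsRegular R rs ∧
    Nonempty ((AdicCompletion (maximalIdeal A) A) ≃+* (R ⧸ Ideal.ofList rs))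

/-- The ideal `Γ_{𝔪}(A)` of elements killed by a power of the maximal ideal. -/
noncomputable def powerTorsionIdeal (A : Type) [CommRing A] [IsLocalRing A] : Ideal A :=
  ⨆ n : ℕ, Submodule.torsionBySet A A ((maximalIdeal A ^ n : Ideal A) : Set A)

end

section Aux

open Submodule RingTheory.Sequence Pointwise

/-- A nonzero local noetherian+artinian module over a local ring is killed by a power of
any element of the maximal ideal; in particular a finite length module over a DVR is
killed by a nonzero scalar. -/
lemma aux_exists_kill (𝒪 : Type) [CommRing 𝒪] [IsDomain 𝒪] [IsDiscreteValuationRing 𝒪]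
    (M : Type) [AddCommGroup M] [Module 𝒪 M] (hfl : IsFiniteLength 𝒪 M) :
    ∃ c : 𝒪, c ≠ 0 ∧ ∀ m : M, c • m = 0 := by
  obtain ⟨hnoeth, hart⟩ := isFiniteLength_iff_isNoetherian_isArtinian.mp hfl
  obtain ⟨ϖ, hϖ⟩ := IsDiscreteValuationRing.exists_irreducible 𝒪
  have hϖm : ϖ ∈ maximalIdeal 𝒪 := by
    rw [IsLocalRing.mem_maximalIdeal]
    exact hϖ.not_isUnit
  let f : ℕ →o (Submodule 𝒪 M)ᵒᵈ :=
    ⟨fun n => (maximalIdeal 𝒪) ^ n • (⊤ : Submodule 𝒪 M), by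
      intro n m hnm
      exact Submodule.smul_mono_left (Ideal.pow_le_pow_right hnm)⟩
  obtain ⟨k, hk⟩ := IsArtinian.monotone_stabilizes f
  have h1 : ((maximalIdeal 𝒪) ^ k • (⊤ : Submodule 𝒪 M)) =
      (maximalIdeal 𝒪) ^ (k + 1) • (⊤ : Submodule 𝒪 M) := hk (k + 1) (Nat.le_succ k)
  have h2 : ((maximalIdeal 𝒪) ^ k • (⊤ : Submodule 𝒪 M)) = ⊥ := by
    refine Submodule.eq_bot_of_le_smul_of_le_jacobson_bot (maximalIdeal 𝒪) _
      (IsNoetherian.noetherian _) ?_ ?_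
    · rw [← Submodule.smul_assoc, Ideal.smul_eq_mul, ← pow_succ']
      exact le_of_eq h1
    · exact le_of_eq (IsLocalRing.jacobson_eq_maximalIdeal ⊥ bot_ne_top).symm
  refine ⟨ϖ ^ k, pow_ne_zero _ hϖ.ne_zero, fun m => ?_⟩
  have : ϖ ^ k • m ∈ ((maximalIdeal 𝒪) ^ k • (⊤ : Submodule 𝒪 M)) :=
    Submodule.smul_mem_smul (Ideal.pow_mem_pow hϖm k) trivial
  rw [h2] at this
  simpa using this

/-- From finiteness of the length of the conormal module one gets `t ∉ 𝔭` with `t𝔭 ⊆ 𝔭²`. -/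
lemma aux_exists_t (𝒪 : Type) [CommRing 𝒪] [IsDomain 𝒪] [IsDiscreteValuationRing 𝒪]
    (A : Type) [CommRing A] [IsLocalRing A] [IsNoetherianRing A]
    (lam : A →+* 𝒪) (hs : Function.Surjective lam)
    (hfin : OFiniteLength lam hs (RingHom.ker lam).Cotangent
      (conormal_torsion (RingHom.ker lam))) :
    ∃ t : A, t ∉ RingHom.ker lam ∧
      ∀ p, ∀ hp : p ∈ RingHom.ker lam, t * p ∈ (RingHom.ker lam) ^ 2 := by
  set 𝔭 : Ideal A := RingHom.ker lam with h𝔭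
  letI i2 := (conormal_torsion (RingHom.ker lam)).module
  letI i1 := oModule lam hs (RingHom.ker lam).Cotangent (conormal_torsion (RingHom.ker lam))
  have hfl : IsFiniteLength 𝒪 (RingHom.ker lam).Cotangent := hfin
  obtain ⟨c, hc0, hc⟩ := aux_exists_kill 𝒪 _ hfl
  obtain ⟨t, ht⟩ := hs c
  have htk : t ∉ RingHom.ker lam := by
    intro hmem
    exact hc0 (ht ▸ RingHom.mem_ker.mp hmem)
  refine ⟨t, htk, fun p hp => ?_⟩
  set x : (RingHom.ker lam).Cotangent := (RingHom.ker lam).toCotangent ⟨p, hp⟩ with hx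
  have h1 : c • x = 0 := hc x
  have hsymm : (RingHom.quotientKerEquivOfSurjective hs).symm c =
      Ideal.Quotient.mk (RingHom.ker lam) t := by
    have he : (RingHom.quotientKerEquivOfSurjective hs)
        (Ideal.Quotient.mk (RingHom.ker lam) t) = c := by
      rw [← ht]
      exact RingHom.kerLift_mk lam t
    rw [← he, RingEquiv.symm_apply_apply]
  have h2 : c • x = t • x := by
    show ((RingHom.quotientKerEquivOfSurjective hs).symm.toRingHom c) • x = t • x
    show ((RingHom.quotientKerEquivOfSurjective hs).symm c) • x = t • x
    rw [hsymm]
    exact Module.IsTorsionBySet.mk_smul (conormal_torsion (RingHom.ker lam)) t x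
  have h3 : (RingHom.ker lam).toCotangent (t • (⟨p, hp⟩ : RingHom.ker lam)) = 0 := by
    rw [map_smul]
    rw [← hx, ← h2, h1]
  have := (Ideal.toCotangent_eq_zero _ _).mp h3
  simpa using this

/-- `𝔭` is a minimal prime, so some `s ∉ 𝔭` kills `𝔭`. -/
lemma aux_exists_s {A : Type} [CommRing A] [IsNoetherianRing A] (𝔭 : Ideal A) [𝔭.IsPrime]
    (t : A) (ht : t ∉ 𝔭) (htp : ∀ p, p ∈ 𝔭 → t * p ∈ 𝔭 ^ 2) :
    ∃ s : A, s ∉ 𝔭 ∧ ∀ p, p ∈ 𝔭 → s * p = 0 := by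
  classical
  set S := 𝔭.primeCompl
  set L := Localization.AtPrime 𝔭 with hL
  haveI : IsNoetherianRing L := IsLocalization.isNoetherianRing S L inferInstance
  have hmax : Ideal.map (algebraMap A L) 𝔭 = IsLocalRing.maximalIdeal L :=
    Localization.AtPrime.map_eq_maximalIdeal
  have hle : Ideal.map (algebraMap A L) 𝔭 ≤
      Ideal.map (algebraMap A L) 𝔭 • Ideal.map (algebraMap A L) 𝔭 := by
    rw [Ideal.smul_eq_mul, ← pow_two, ← Ideal.map_pow, Ideal.map_le_iff_le_comap]
    intro p hp
    obtain ⟨u, hu⟩ := IsLocalization.map_units L (⟨t, ht⟩ : S)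
    rw [Ideal.mem_comap]
    have h2 : algebraMap A L (t * p) ∈ Ideal.map (algebraMap A L) (𝔭 ^ 2) :=
      Ideal.mem_map_of_mem _ (htp p hp)
    have h3 : algebraMap A L p = ↑u⁻¹ * algebraMap A L (t * p) := by
      rw [map_mul, ← mul_assoc, ← hu]
      simp
    rw [h3]
    exact Ideal.mul_mem_left _ _ h2
  have hbot : Ideal.map (algebraMap A L) 𝔭 = ⊥ :=
    Submodule.eq_bot_of_le_smul_of_le_jacobson_bot _ _ (IsNoetherian.noetherian _) hle
      (by rw [hmax]; exact le_of_eq (IsLocalRing.jacobson_eq_maximalIdeal ⊥ bot_ne_top).symm)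
  have hker : ∀ p, p ∈ 𝔭 → ∃ m : S, (m : A) * p = 0 := by
    intro p hp
    have h0 : algebraMap A L p = 0 := by
      have := Ideal.mem_map_of_mem (algebraMap A L) hp
      rw [hbot, Ideal.mem_bot] at this
      exact this
    exact (IsLocalization.map_eq_zero_iff S L p).mp h0
  obtain ⟨T, hT⟩ : 𝔭.FG := IsNoetherian.noetherian 𝔭
  choose f hf using fun g : {x // x ∈ T} =>
    hker g (hT ▸ Ideal.subset_span g.2)
  set s : S := ∏ g ∈ T.attach, f g with hsdef
  refine ⟨(s : A), s.2, ?_⟩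
  have hcoe : (s : A) = ∏ g ∈ T.attach, (f g : A) := by
    simp [hsdef]
  have hgen : ∀ g, ∀ hg : g ∈ T, (s : A) * g = 0 := by
    intro g hg
    rw [hcoe, ← Finset.mul_prod_erase T.attach _ (Finset.mem_attach T ⟨g, hg⟩)]
    rw [mul_comm ((f ⟨g, hg⟩ : A)) _, mul_assoc, hf ⟨g, hg⟩, mul_zero]
  intro p hp
  rw [← hT] at hp
  induction hp using Submodule.span_induction with
  | mem x hx => exact hgen x hx
  | zero => exact mul_zero _
  | add x y _ _ hx hy => rw [mul_add, hx, hy, add_zero]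
  | smul a x _ hx => rw [smul_eq_mul, mul_comm a x, ← mul_assoc, hx, zero_mul]

lemma aux_lam_not_unit {𝒪 A : Type} [CommRing 𝒪] [Nontrivial 𝒪] [CommRing A] [IsLocalRing A]
    (lam : A →+* 𝒪) (hs : Function.Surjective lam) {a : A}
    (ha : a ∈ IsLocalRing.maximalIdeal A) : ¬ IsUnit (lam a) := by
  intro hu
  obtain ⟨v, hv⟩ := hu.exists_right_inv
  obtain ⟨v', rfl⟩ := hs v
  have h1 : a * v' - 1 ∈ RingHom.ker lam := by
    rw [RingHom.mem_ker, map_sub, map_mul, map_one, hv, sub_self]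
  have hker : RingHom.ker lam ≤ IsLocalRing.maximalIdeal A := by
    apply IsLocalRing.le_maximalIdeal
    intro htop
    have : (1 : A) ∈ RingHom.ker lam := htop ▸ Submodule.mem_top
    rw [RingHom.mem_ker, map_one] at this
    exact one_ne_zero this
  have h2 : (1 : A) ∈ IsLocalRing.maximalIdeal A := by
    have h3 : a * v' ∈ IsLocalRing.maximalIdeal A := Ideal.mul_mem_right _ _ ha
    have := Submodule.sub_mem _ h3 (hker h1)
    simpa using this
  exact (IsLocalRing.maximalIdeal.isMaximal A).ne_top (Ideal.eq_top_iff_one _ |>.mpr h2)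

/-- The main obstruction: there is no regular sequence of length two. -/
lemma aux_no_two (𝒪 : Type) [CommRing 𝒪] [IsDomain 𝒪] [IsDiscreteValuationRing 𝒪]
    (A : Type) [CommRing A] [IsLocalRing A] [IsNoetherianRing A]
    (lam : A →+* 𝒪) (hs : Function.Surjective lam)
    (hfin : OFiniteLength lam hs (RingHom.ker lam).Cotangent
      (conormal_torsion (RingHom.ker lam)))
    (a b : A) (ha : a ∈ IsLocalRing.maximalIdeal A) (hb : b ∈ IsLocalRing.maximalIdeal A)
    (hra : IsSMulRegular A a) (hrb : IsSMulRegular (QuotSMulTop a A) b) : False := by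
  classical
  set 𝔭 : Ideal A := RingHom.ker lam with h𝔭
  haveI : 𝔭.IsPrime := RingHom.ker_isPrime lam
  obtain ⟨t, ht, htp⟩ := aux_exists_t 𝒪 A lam hs hfin
  obtain ⟨s, hsn, hsp⟩ := aux_exists_s 𝔭 t ht htp
  have ha𝔭 : a ∉ 𝔭 := by
    intro hmem
    have h0 : a • s = a • (0 : A) := by
      rw [smul_eq_mul, smul_zero, mul_comm]
      exact hsp a hmem
    exact hsn (hra h0 ▸ 𝔭.zero_mem)
  set N : Submodule A A := a • (⊤ : Submodule A A) with hN
  have hNmem : ∀ x : A, x ∈ N ↔ ∃ c : A, a * c = x := by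
    intro x
    constructor
    · rintro ⟨c, -, rfl⟩
      exact ⟨c, rfl⟩
    · rintro ⟨c, rfl⟩
      exact ⟨c, trivial, rfl⟩
  -- The annihilator of 𝔭 in A
  set H : Ideal A := Submodule.annihilator (𝔭 : Submodule A A) with hH
  have hsH : s ∈ H := Submodule.mem_annihilator.mpr fun p hp => by
    simpa using hsp p hp
  have hHne : H ≠ ⊥ := by
    intro hbot
    rw [hbot, Submodule.mem_bot] at hsH
    exact hsn (hsH ▸ 𝔭.zero_mem)
  -- there is z ∉ (a) with 𝔭 z ⊆ (a)
  have key : ∃ z : A, z ∉ N ∧ ∀ p, p ∈ 𝔭 → p * z ∈ N := by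
    by_contra hcon
    push_neg at hcon
    apply hHne
    refine Submodule.eq_bot_of_le_smul_of_le_jacobson_bot (Ideal.span {a}) H
      (IsNoetherian.noetherian _) ?_ ?_
    · intro h hh
      have hzN : h ∈ N := by
        by_contra hno
        obtain ⟨p, hp, hpz⟩ := hcon h hno
        apply hpz
        have : p * h = 0 := by
          rw [mul_comm]
          simpa using Submodule.mem_annihilator.mp hh p hp
        rw [this]
        exact N.zero_mem
      obtain ⟨h', hh'⟩ := (hNmem h).mp hzN
      have hh'H : h' ∈ H := by
        rw [hH]
        rw [Submodule.mem_annihilator]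
        intro p hp
        apply hra
        show a • (h' • p) = a • (0 : A)
        have hr : a * (h' * p) = p * h := by rw [← hh']; ring
        rw [smul_zero, smul_eq_mul, smul_eq_mul, hr, mul_comm]
        simpa using Submodule.mem_annihilator.mp hh p hp
      have : a • h' ∈ Ideal.span {a} • H :=
        Submodule.smul_mem_smul (Ideal.mem_span_singleton_self a) hh'H
      rwa [show a • h' = h from by rw [smul_eq_mul, hh']] at this
    · rw [IsLocalRing.jacobson_eq_maximalIdeal ⊥ bot_ne_top]
      rw [Ideal.span_le, Set.singleton_subset_iff]
      exact ha
  obtain ⟨z, hz1, hz2⟩ := key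
  -- valuation-theoretic step
  have hla0 : lam a ≠ 0 := fun h0 => ha𝔭 (RingHom.mem_ker.mpr h0)
  have hlau : ¬ IsUnit (lam a) := aux_lam_not_unit lam hs ha
  obtain ⟨ϖ, hϖ⟩ := IsDiscreteValuationRing.exists_irreducible 𝒪
  obtain ⟨n, u, hu⟩ := IsDiscreteValuationRing.eq_unit_mul_pow_irreducible hla0 hϖ
  have hn : n ≠ 0 := by
    rintro rfl
    exact hlau (by rw [hu, pow_zero, mul_one]; exact u.isUnit)
  have hdvd : lam a ∣ lam (b ^ n) := by
    rw [map_pow]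
    by_cases hlb : lam b = 0
    · rw [hlb, zero_pow hn]
      exact dvd_zero _
    · have hlbu : ¬ IsUnit (lam b) := aux_lam_not_unit lam hs hb
      obtain ⟨m, ub, hub⟩ := IsDiscreteValuationRing.eq_unit_mul_pow_irreducible hlb hϖ
      have hm : m ≠ 0 := by
        rintro rfl
        exact hlbu (by rw [hub, pow_zero, mul_one]; exact ub.isUnit)
      rw [hu, hub, mul_pow, ← pow_mul]
      rw [Units.mul_left_dvd]
      exact Dvd.dvd.mul_left (pow_dvd_pow ϖ (Nat.le_mul_of_pos_left n (Nat.pos_of_ne_zero hm))) _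
  -- every element whose image is divisible by lam a multiplies z into N
  have claim : ∀ w : A, lam a ∣ lam w → w * z ∈ N := by
    intro w hw
    obtain ⟨c, hc⟩ := hw
    obtain ⟨c', hc'⟩ := hs c
    have hwc : w - a * c' ∈ 𝔭 := by
      rw [h𝔭, RingHom.mem_ker, map_sub, map_mul, hc', ← hc, sub_self]
    have h1 : (w - a * c') * z ∈ N := hz2 _ hwc
    have h2 : (a * c') * z ∈ N := by
      have : a • (c' * z) ∈ N :=
        Submodule.smul_mem_pointwise_smul _ _ _ trivial
      rwa [smul_eq_mul, ← mul_assoc] at this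
    have := N.add_mem h1 h2
    rwa [sub_mul, sub_add_cancel] at this
  -- conclude
  have hzero : (b ^ n) • (Submodule.Quotient.mk z : QuotSMulTop a A) =
      (b ^ n) • (0 : QuotSMulTop a A) := by
    rw [smul_zero, ← Submodule.Quotient.mk_smul, Submodule.Quotient.mk_eq_zero]
    have : (b ^ n) * z ∈ N := claim (b ^ n) hdvd
    simpa using this
  have := (hrb.pow n) hzero
  rw [Submodule.Quotient.mk_eq_zero] at this
  exact hz1 this

end Aux

/-- For any object `(A, λ_A)` of the category `C_𝒪`
(so `A` is a commutative noetherian local ring, `λ_A : A → 𝒪` a surjective ring map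
to the discrete valuation ring `𝒪` whose conormal module `𝔭_A/𝔭_A²` has finite
length over `𝒪`), one has `depth A ≤ 1 ≤ dim A`. -/
theorem statement0
    (𝒪 : Type) [CommRing 𝒪] [IsDomain 𝒪] [IsDiscreteValuationRing 𝒪]
    (A : Type) [CommRing A] [IsLocalRing A] [IsNoetherianRing A]
    (lam : A →+* 𝒪) (hs : Function.Surjective lam)
    (hfin : OFiniteLength lam hs (RingHom.ker lam).Cotangent
      (conormal_torsion (RingHom.ker lam))) :
    mDepth A A ≤ 1 ∧ 1 ≤ ringKrullDim A := by
  constructor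
  · -- depth ≤ 1
    apply sSup_le
    rintro n ⟨rs, hlen, hmem, hreg⟩
    rw [← hlen]
    match rs with
    | [] => simp
    | [a] => simp
    | a :: b :: rest =>
      exfalso
      have hw := hreg.toIsWeaklyRegular
      rw [RingTheory.Sequence.isWeaklyRegular_cons_iff] at hw
      obtain ⟨h1, hw2⟩ := hw
      rw [RingTheory.Sequence.isWeaklyRegular_cons_iff] at hw2
      exact aux_no_two 𝒪 A lam hs hfin a b
        (hmem a (by simp)) (hmem b (by simp)) h1 hw2.1
  · -- 1 ≤ dim
    have hp : (RingHom.ker lam).IsPrime := RingHom.ker_isPrime lam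
    obtain ⟨ϖ, hϖ⟩ := IsDiscreteValuationRing.exists_irreducible 𝒪
    obtain ⟨t, ht⟩ := hs ϖ
    have ht𝔭 : t ∉ RingHom.ker lam := fun h =>
      hϖ.ne_zero (ht ▸ RingHom.mem_ker.mp h)
    have htm : t ∈ maximalIdeal A := by
      rw [IsLocalRing.mem_maximalIdeal]
      intro hu
      exact hϖ.not_isUnit (ht ▸ hu.map lam)
    set P0 : PrimeSpectrum A := ⟨RingHom.ker lam, hp⟩
    set P1 : PrimeSpectrum A := ⟨maximalIdeal A, (maximalIdeal.isMaximal A).isPrime⟩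
    have hlt : P0 < P1 := by
      rw [← PrimeSpectrum.asIdeal_lt_asIdeal]
      refine lt_of_le_of_ne (IsLocalRing.le_maximalIdeal hp.ne_top) ?_
      intro heq
      have heq' : RingHom.ker lam = maximalIdeal A := heq
      exact ht𝔭 (heq' ▸ htm)
    let c : LTSeries (PrimeSpectrum A) := (RelSeries.singleton _ P0).snoc P1
      (by rwa [RelSeries.last_singleton])
    have hc := Order.LTSeries.length_le_krullDim c
    have hclen : c.length = 1 := rfl
    rw [hclen] at hc
    exact_mod_cast hc
end

section
/- Let (A, λ_A) be an object of C_𝒪. Then the 𝒪-module I_A := A[𝔭_A] has rank one, i.e. I_A ⊗_A A_{𝔭_A} is a one-dimensional K-vector space; consequently λ_A(I_A) ≠ 0 and the congruence algebra Ψ_A := 𝒪/λ_A(I_A) has finite length as an 𝒪-module. -/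
open IsLocalRing CategoryTheory

section MyAux

open IsLocalRing

lemma myAux_exists_pow_smul_eq_zero {O : Type} [CommRing O] [IsLocalRing O]
    {M : Type} [AddCommGroup M] [Module O M] (hart : IsArtinian O M)
    {p : O} (hp : p ∈ maximalIdeal O) (x : M) : ∃ n : ℕ, p ^ n • x = 0 := by
  have hmono : ∀ m n : ℕ, m ≤ n →
      (Submodule.span O {p ^ n • x}) ≤ Submodule.span O {p ^ m • x} := by
    intro m n h
    rw [Submodule.span_le, Set.singleton_subset_iff]
    have : p ^ n • x = p ^ (n - m) • (p ^ m • x) := by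
      rw [smul_smul, ← pow_add, Nat.sub_add_cancel h]
    rw [this]
    exact Submodule.smul_mem _ _ (Submodule.mem_span_singleton_self _)
  obtain ⟨n, hn⟩ := IsArtinian.monotone_stabilizes (R := O) (M := M)
    ⟨fun n => OrderDual.toDual (Submodule.span O {p ^ n • x}),
      fun m n h => hmono m n h⟩
  have heq : Submodule.span O {p ^ n • x} = Submodule.span O {p ^ (n + 1) • x} :=
    hn (n + 1) (Nat.le_succ n)
  have h1 : p ^ n • x ∈ Submodule.span O {p ^ (n + 1) • x} := by
    rw [← heq]
    exact Submodule.mem_span_singleton_self _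
  obtain ⟨c, hc⟩ := Submodule.mem_span_singleton.mp h1
  refine ⟨n, ?_⟩
  have hu : IsUnit (1 - c * p) :=
    isUnit_one_sub_self_of_mem_nonunits _ (Ideal.mul_mem_left _ c hp)
  have h2 : (1 - c * p) • (p ^ n • x) = 0 := by
    have hcp : (c * p) • (p ^ n • x) = c • (p ^ (n + 1) • x) := by
      rw [smul_smul, smul_smul, mul_assoc, ← pow_succ']
    rw [sub_smul, one_smul, hcp, hc, sub_self]
  have h4 := congrArg (fun z => ((hu.unit⁻¹ : Oˣ) : O) • z) h2
  simp only [smul_zero] at h4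
  rw [smul_smul] at h4
  have h5 : ((hu.unit⁻¹ : Oˣ) : O) * (1 - c * p) = 1 := hu.val_inv_mul
  rwa [h5, one_smul] at h4

lemma myAux_oModule_smul_eq {O A : Type} [CommRing O] [CommRing A] (lam : A →+* O)
    (hs : Function.Surjective lam) (M : Type) [AddCommGroup M] [Module A M]
    (h : Module.IsTorsionBySet A M (RingHom.ker lam : Set A)) (t : A) (x : M) :
    (letI := oModule lam hs M h; lam t • x) = t • x := by
  letI := h.module
  have h1 : (RingHom.quotientKerEquivOfSurjective hs).symm (lam t)
      = Ideal.Quotient.mk (RingHom.ker lam) t := by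
    apply (RingHom.quotientKerEquivOfSurjective hs).injective
    rw [RingEquiv.apply_symm_apply]
    exact (RingHom.kerLift_mk lam t).symm
  show (RingHom.quotientKerEquivOfSurjective hs).symm (lam t) • x = t • x
  rw [h1]
  exact h.mk_smul t x

end MyAux


/-- For an object `(A, λ_A)` of `C_𝒪`, the `𝒪`-module
`I_A := A[𝔭_A]` (the annihilator of `𝔭_A`) has rank one, i.e. its localization at
`𝔭_A` is a one-dimensional vector space over `A_{𝔭_A} (≅ K)`; consequently
`λ_A(I_A) ≠ 0` and the congruence algebra `Ψ_A = 𝒪/λ_A(I_A)` has finite length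
over `𝒪`. -/

theorem statement2
    (𝒪 : Type) [CommRing 𝒪] [IsDomain 𝒪] [IsDiscreteValuationRing 𝒪]
    (A : Type) [CommRing A] [IsLocalRing A] [IsNoetherianRing A]
    (lam : A →+* 𝒪) (hs : Function.Surjective lam)
    (hfin : OFiniteLength lam hs (RingHom.ker lam).Cotangent
      (conormal_torsion (RingHom.ker lam))) :
    letI : (RingHom.ker lam).IsPrime := RingHom.ker_isPrime lam
    Module.rank (Localization.AtPrime (RingHom.ker lam))
      (LocalizedModule (RingHom.ker lam).primeCompl
        (Submodule.annihilator (RingHom.ker lam))) = 1 ∧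
    Ideal.map lam (Submodule.annihilator (RingHom.ker lam)) ≠ ⊥ ∧
    IsFiniteLength 𝒪 (𝒪 ⧸ Ideal.map lam (Submodule.annihilator (RingHom.ker lam))) := by
  letI : (RingHom.ker lam).IsPrime := RingHom.ker_isPrime lam
  set P : Ideal A := RingHom.ker lam with hPdef
  obtain ⟨pi, hpi⟩ := IsDiscreteValuationRing.exists_irreducible 𝒪
  obtain ⟨t, ht⟩ := hs pi
  have htS : t ∈ P.primeCompl := by
    intro hker
    exact hpi.ne_zero (by rwa [hPdef, SetLike.mem_coe, RingHom.mem_ker, ht] at hker)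
  -- torsion of the conormal module
  have htors : ∀ p : P, ∃ n : ℕ, P.toCotangent (t ^ n • p) = 0 := by
    letI := oModule lam hs P.Cotangent (conormal_torsion P)
    have hart : IsArtinian 𝒪 P.Cotangent :=
      (isFiniteLength_iff_isNoetherian_isArtinian.mp hfin).2
    have hpim : pi ∈ maximalIdeal 𝒪 := by
      rw [mem_maximalIdeal, mem_nonunits_iff]
      exact hpi.not_isUnit
    intro p
    obtain ⟨n, hn⟩ := myAux_exists_pow_smul_eq_zero hart hpim (P.toCotangent p)
    refine ⟨n, ?_⟩
    rw [map_smul]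
    have hkey := myAux_oModule_smul_eq lam hs P.Cotangent (conormal_torsion P)
      (t ^ n) (P.toCotangent p)
    rw [← hkey, map_pow, ht]
    exact hn
  have htors2 : ∀ p ∈ P, ∃ n : ℕ, t ^ n * p ∈ P ^ 2 := by
    intro p hp
    obtain ⟨n, hn⟩ := htors ⟨p, hp⟩
    exact ⟨n, (P.toCotangent_eq_zero _).mp hn⟩
  -- the localization at P
  set L := Localization.AtPrime P with hLdef
  haveI : IsNoetherianRing L :=
    IsLocalization.isNoetherianRing P.primeCompl L inferInstance
  have key : Ideal.map (algebraMap A L) P ≤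
      Ideal.map (algebraMap A L) P • Ideal.map (algebraMap A L) P := by
    rw [smul_eq_mul, ← pow_two, ← Ideal.map_pow, Ideal.map_le_iff_le_comap]
    intro p hp
    obtain ⟨n, hn⟩ := htors2 p hp
    have h1 : algebraMap A L (t ^ n * p) ∈ Ideal.map (algebraMap A L) (P ^ 2) :=
      Ideal.mem_map_of_mem _ hn
    have hu : IsUnit (algebraMap A L (t ^ n)) :=
      IsLocalization.map_units L (⟨t, htS⟩ ^ n : P.primeCompl)
    have h2 : ((hu.unit⁻¹ : Lˣ) : L) * algebraMap A L (t ^ n * p) = algebraMap A L p := by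
      rw [map_mul, ← mul_assoc]
      have h5 : ((hu.unit⁻¹ : Lˣ) : L) * (algebraMap A L (t ^ n)) = 1 := hu.val_inv_mul
      rw [h5, one_mul]
    show algebraMap A L p ∈ Ideal.map (algebraMap A L) (P ^ 2)
    rw [← h2]
    exact Ideal.mul_mem_left _ _ h1
  have hmax : maximalIdeal L = ⊥ := by
    refine Submodule.eq_bot_of_le_smul_of_le_jacobson_bot (maximalIdeal L)
      (maximalIdeal L) (IsNoetherian.noetherian _) ?_
      (le_of_eq (jacobson_eq_maximalIdeal ⊥ bot_ne_top).symm)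
    have hme : Ideal.map (algebraMap A L) P = maximalIdeal L :=
      Localization.AtPrime.map_eq_maximalIdeal
    rw [← hme]
    exact key
  have hzero : ∀ p ∈ P, algebraMap A L p = 0 := by
    intro p hp
    have h1 : algebraMap A L p ∈ maximalIdeal L := by
      have hme : Ideal.map (algebraMap A L) P = maximalIdeal L :=
        Localization.AtPrime.map_eq_maximalIdeal
      rw [← hme]
      exact Ideal.mem_map_of_mem _ hp
    rwa [hmax, Ideal.mem_bot] at h1
  -- a single annihilating element in the prime complement
  have hchoice : ∀ a : A, a ∈ P → ∃ c : A, c ∈ P.primeCompl ∧ c * a = 0 := by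
    intro a ha
    obtain ⟨m, hm⟩ := (IsLocalization.map_eq_zero_iff P.primeCompl L a).mp (hzero a ha)
    exact ⟨m, m.2, hm⟩
  obtain ⟨T, hT⟩ := (IsNoetherian.noetherian P : P.FG)
  classical
  set g : A → A := fun a => if h : a ∈ P then (hchoice a h).choose else 1 with hgdef
  have hgS : ∀ a : A, g a ∈ P.primeCompl := by
    intro a
    by_cases h : a ∈ P
    · simp only [hgdef, dif_pos h]
      exact (hchoice a h).choose_spec.1
    · simp only [hgdef, dif_neg h]
      exact P.primeCompl.one_mem
  have hgkill : ∀ a : A, a ∈ P → g a * a = 0 := by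
    intro a h
    simp only [hgdef, dif_pos h]
    exact (hchoice a h).choose_spec.2
  set c : A := ∏ a ∈ T, g a with hcdef
  have hcS : c ∈ P.primeCompl := Submonoid.prod_mem _ (fun a _ => hgS a)
  have hckill : ∀ p ∈ P, c * p = 0 := by
    have hker : P ≤ LinearMap.ker (LinearMap.lsmul A A c) := by
      rw [← hT, Submodule.span_le]
      intro a haT
      have haP : a ∈ P := by rw [← hT]; exact Submodule.subset_span haT
      rw [SetLike.mem_coe, LinearMap.mem_ker, LinearMap.lsmul_apply, smul_eq_mul]
      calc c * a = ((g a) * ∏ x ∈ T.erase a, g x) * a := by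
            rw [Finset.mul_prod_erase _ _ haT]
        _ = (∏ x ∈ T.erase a, g x) * (g a * a) := by ring
        _ = 0 := by rw [hgkill a haP, mul_zero]
    intro p hp
    have := hker hp
    rwa [LinearMap.mem_ker, LinearMap.lsmul_apply, smul_eq_mul] at this
  have hcann : c ∈ Submodule.annihilator P := by
    rw [Submodule.mem_annihilator]
    intro n hn
    exact hckill n hn
  -- localized module of the annihilator
  set I : Ideal A := Submodule.annihilator P with hIdef
  set g0 : I →ₗ[A] L := (Algebra.linearMap A L).comp (Submodule.subtype I) with hg0def
  haveI hlocmod : IsLocalizedModule P.primeCompl g0 := by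
    constructor
    · intro s
      exact IsLocalizedModule.map_units (Algebra.linearMap A L) s
    · intro y
      obtain ⟨⟨a, s⟩, hy⟩ := IsLocalization.surj P.primeCompl y
      refine ⟨⟨⟨c * a, Ideal.mul_mem_right a _ hcann⟩, (⟨c, hcS⟩ : P.primeCompl) * s⟩, ?_⟩
      show (((⟨c, hcS⟩ : P.primeCompl) * s : P.primeCompl) : A) • y = algebraMap A L (c * a)
      have hrhs : algebraMap A L (c * a) = algebraMap A L c * algebraMap A L a :=
        map_mul _ _ _
      rw [Submonoid.coe_mul, Algebra.smul_def, hrhs, map_mul, mul_assoc,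
        mul_comm ((algebraMap A L) (s : A)) y, hy]
    · intro x y hxy
      have hxy' : algebraMap A L (x : A) = algebraMap A L (y : A) := hxy
      obtain ⟨m, hm⟩ := (IsLocalization.eq_iff_exists P.primeCompl L).mp hxy'
      refine ⟨m, Subtype.ext ?_⟩
      show (m : A) * (x : A) = (m : A) * (y : A)
      exact hm
  refine ⟨?_, ?_, ?_⟩
  · -- rank one
    set e2 := IsLocalizedModule.iso P.primeCompl g0 with he2
    set e3 := e2.toLinearMap.extendScalarsOfIsLocalization P.primeCompl L with he3
    have hbij : Function.Bijective e3 := e2.bijective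
    have := (LinearEquiv.ofBijective e3 hbij).rank_eq
    rw [this]
    exact Module.rank_self L
  · -- nonzero image
    intro hbot
    have h1 : lam c ∈ Ideal.map lam I := Ideal.mem_map_of_mem _ hcann
    rw [hbot, Ideal.mem_bot] at h1
    exact hcS (by rwa [hPdef, SetLike.mem_coe, RingHom.mem_ker])
  · -- finite length of the congruence module
    have hJne : Ideal.map lam I ≠ ⊥ := by
      intro hbot
      have h1 : lam c ∈ Ideal.map lam I := Ideal.mem_map_of_mem _ hcann
      rw [hbot, Ideal.mem_bot] at h1
      exact hcS (by rwa [hPdef, SetLike.mem_coe, RingHom.mem_ker])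
    set J : Ideal 𝒪 := Ideal.map lam I with hJdef
    obtain ⟨n, hn⟩ := IsDiscreteValuationRing.ideal_eq_span_pow_irreducible hJne hpi
    rw [isFiniteLength_iff_isNoetherian_isArtinian]
    constructor
    · infer_instance
    · -- finitely many submodules
      have hfinite : Finite (Submodule 𝒪 (𝒪 ⧸ J)) := by
        have hcomap_inj : Function.Injective
            (Submodule.comap (J.mkQ) : Submodule 𝒪 (𝒪 ⧸ J) → Ideal 𝒪) :=
          Submodule.comap_injective_of_surjective (Submodule.mkQ_surjective J)
        have hmem : ∀ N : Submodule 𝒪 (𝒪 ⧸ J), ∃ m : ℕ, m ≤ n ∧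
            Submodule.comap (J.mkQ) N = Ideal.span {pi ^ m} := by
          intro N
          have hJle : J ≤ Submodule.comap (J.mkQ) N := by
            intro x hx
            have : J.mkQ x = 0 := by
              rwa [← LinearMap.mem_ker, Submodule.ker_mkQ]
            simp [Submodule.mem_comap, this]
          have hne : Submodule.comap (J.mkQ) N ≠ ⊥ := by
            intro hbot
            rw [hbot, le_bot_iff] at hJle
            exact hJne hJle
          obtain ⟨m, hm⟩ := IsDiscreteValuationRing.ideal_eq_span_pow_irreducible hne hpi
          refine ⟨m, ?_, hm⟩
          have hdvd : pi ^ m ∣ pi ^ n := by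
            have : pi ^ n ∈ Ideal.span {pi ^ m} := by
              rw [← hm]
              apply hJle
              rw [hn]
              exact Ideal.subset_span rfl
            rwa [Ideal.mem_span_singleton] at this
          exact (pow_dvd_pow_iff hpi.ne_zero hpi.not_isUnit).mp hdvd
        set F : Submodule 𝒪 (𝒪 ⧸ J) → Fin (n + 1) :=
          fun N => ⟨(hmem N).choose, Nat.lt_succ_of_le (hmem N).choose_spec.1⟩ with hFdef
        have hFinj : Function.Injective F := by
          intro N1 N2 hF
          apply hcomap_inj
          rw [(hmem N1).choose_spec.2, (hmem N2).choose_spec.2]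
          have hvv : (hmem N1).choose = (hmem N2).choose := congrArg Fin.val hF
          rw [hvv]
        exact Finite.of_injective F hFinj
      haveI := hfinite
      exact Finite.to_wellFoundedLT
end

section
/- Let (A, λ_A) be an object of C_𝒪. Then 𝔭_A = A[I_A], i.e. the annihilator of I_A in A equals 𝔭_A. -/
open IsLocalRing CategoryTheory

section Aux

/-- smul translation: the 𝒪-action via `oModule` agrees with the A-action through `lam`. -/
lemma oSmul_eq' {𝒪 A : Type} [CommRing 𝒪] [CommRing A] (lam : A →+* 𝒪)
    (hs : Function.Surjective lam) (M : Type) [AddCommGroup M] [Module A M]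
    (h : Module.IsTorsionBySet A M (RingHom.ker lam : Set A)) (a : A) (x : M) :
    letI := oModule lam hs M h
    (lam a) • x = a • x := by
  letI := h.module
  letI : Module 𝒪 M := oModule lam hs M h
  show ((RingHom.quotientKerEquivOfSurjective hs).symm.toRingHom (lam a)) • x = a • x
  have heq : (RingHom.quotientKerEquivOfSurjective hs).symm (lam a)
      = Ideal.Quotient.mk (RingHom.ker lam) a := by
    apply (RingHom.quotientKerEquivOfSurjective hs).injective
    rw [RingEquiv.apply_symm_apply]
    exact (RingHom.kerLift_mk lam a).symm
  rw [RingEquiv.toRingHom_eq_coe, RingHom.coe_coe, heq]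
  exact h.mk_smul a x

/-- A finite length module over a DVR is killed by a power of any lift of a uniformizer. -/
lemma key_kill {𝒪 A : Type} [CommRing 𝒪] [IsDomain 𝒪] [IsDiscreteValuationRing 𝒪]
    [CommRing A] (lam : A →+* 𝒪) (hs : Function.Surjective lam)
    (M : Type) [AddCommGroup M] [Module A M]
    (h : Module.IsTorsionBySet A M (RingHom.ker lam : Set A))
    (hfin : OFiniteLength lam hs M h) :
    ∃ s : A, lam s ≠ 0 ∧ ∀ x : M, s • x = 0 := by
  letI instO : Module 𝒪 M := oModule lam hs M h
  have hfin' : IsFiniteLength 𝒪 M := hfin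
  obtain ⟨hnoe, hart⟩ := isFiniteLength_iff_isNoetherian_isArtinian.mp hfin'
  obtain ⟨π, hπ⟩ := IsDiscreteValuationRing.exists_irreducible 𝒪
  obtain ⟨p, hp⟩ := hs π
  obtain ⟨n, hn⟩ := IsArtinian.range_smul_pow_stabilizes M π
  set N : Submodule 𝒪 M := LinearMap.range (π ^ n • LinearMap.id : M →ₗ[𝒪] M) with hN
  have hNbot : N = ⊥ := by
    apply Submodule.eq_bot_of_le_smul_of_le_jacobson_bot (IsLocalRing.maximalIdeal 𝒪) N
      (IsNoetherian.noetherian N)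
    · rintro x ⟨y, rfl⟩
      have hmem : π ^ n • y ∈ LinearMap.range (π ^ (n + 1) • LinearMap.id : M →ₗ[𝒪] M) := by
        rw [← hn (n + 1) n.le_succ]; exact ⟨y, rfl⟩
      obtain ⟨z, hz⟩ := hmem
      simp only [LinearMap.smul_apply, LinearMap.id_apply] at hz ⊢
      rw [← hz, pow_succ, mul_comm, mul_smul]
      exact Submodule.smul_mem_smul ((IsLocalRing.mem_maximalIdeal _).mpr hπ.not_isUnit) ⟨z, rfl⟩
    · exact le_of_eq (IsLocalRing.jacobson_eq_maximalIdeal ⊥ bot_ne_top).symm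
  refine ⟨p ^ n, ?_, ?_⟩
  · rw [map_pow, hp]
    exact pow_ne_zero n hπ.ne_zero
  · intro x
    have h1 : (π ^ n : 𝒪) • x = 0 := by
      have hx : π ^ n • x ∈ N := ⟨x, rfl⟩
      rw [hNbot] at hx; simpa using hx
    have h2 := oSmul_eq' lam hs M h (p ^ n) x
    rw [map_pow, hp] at h2
    rw [← h2, h1]

/-- Existence of an element `t` with `lam t ≠ 0` annihilating `ker lam`. -/
lemma exists_ann {𝒪 A : Type} [CommRing 𝒪] [IsDomain 𝒪] [IsDiscreteValuationRing 𝒪]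
    [CommRing A] [IsNoetherianRing A]
    (lam : A →+* 𝒪) (hs : Function.Surjective lam)
    (hfin : OFiniteLength lam hs (RingHom.ker lam).Cotangent
      (conormal_torsion (RingHom.ker lam))) :
    ∃ t : A, lam t ≠ 0 ∧ ∀ x ∈ RingHom.ker lam, t * x = 0 := by
  set 𝔭 : Ideal A := RingHom.ker lam with h𝔭
  obtain ⟨s, hs0, hskill⟩ := key_kill lam hs 𝔭.Cotangent (conormal_torsion 𝔭) hfin
  -- s • 𝔭 ⊆ 𝔭 • ⊤ inside the module ↥𝔭
  have hsq : ∀ y : 𝔭, s • y ∈ (𝔭 • ⊤ : Submodule A 𝔭) := by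
    intro y
    have h0 : 𝔭.toCotangent (s • y) = 0 := by rw [map_smul, hskill]
    rw [Ideal.toCotangent_apply] at h0
    exact (Submodule.Quotient.mk_eq_zero _).mp h0
  haveI : Module.Finite A 𝔭 := Module.Finite.iff_fg.mpr (IsNoetherian.noetherian 𝔭)
  obtain ⟨q, hqm, -, hqc, hq0⟩ :=
    LinearMap.exists_monic_and_coeff_mem_pow_and_aeval_eq_zero_of_range_le_smul A
      (algebraMap A (Module.End A 𝔭) s) 𝔭 (by
        rintro _ ⟨y, rfl⟩
        rw [Module.algebraMap_end_apply]
        exact hsq y)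
  set t : A := q.eval s with htdef
  have haev : algebraMap A (Module.End A 𝔭) t = 0 := by
    rw [← hq0, Polynomial.aeval_algebraMap_apply_eq_algebraMap_eval]
  refine ⟨t, ?_, ?_⟩
  · -- lam t = (lam s) ^ natDegree q ≠ 0
    set d := q.natDegree with hd
    have ht : t = ∑ k ∈ Finset.range (d + 1), q.coeff k * s ^ k := by
      rw [htdef, Polynomial.eval_eq_sum_range]
    have hlam : lam t = (lam s) ^ d := by
      rw [ht, map_sum]
      rw [Finset.sum_eq_single_of_mem d (Finset.self_mem_range_succ d)]
      · rw [hqm.coeff_natDegree, one_mul, map_pow]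
      · intro k hk hkd
        have hklt : k < d := lt_of_le_of_ne (Nat.lt_succ_iff.mp (Finset.mem_range.mp hk)) hkd
        have hmem : q.coeff k ∈ 𝔭 := by
          have := hqc k
          exact Ideal.pow_le_self (Nat.sub_ne_zero_of_lt hklt) this
        rw [map_mul, RingHom.mem_ker.mp hmem, zero_mul]
    rw [hlam]
    exact pow_ne_zero d hs0
  · intro x hx
    have := congrFun (congrArg DFunLike.coe haev) ⟨x, hx⟩
    rw [Module.algebraMap_end_apply] at this
    have : (↑(t • (⟨x, hx⟩ : 𝔭)) : A) = 0 := by rw [this]; rfl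
    simpa using this

end Aux

/-- For an object `(A, λ_A)` of `C_𝒪`, with `𝔭_A = ker λ_A` and
`I_A = A[𝔭_A]` the annihilator of `𝔭_A`, one has `𝔭_A = A[I_A]`, i.e. the
annihilator of `I_A` equals `𝔭_A`. -/
theorem statement3
    (𝒪 : Type) [CommRing 𝒪] [IsDomain 𝒪] [IsDiscreteValuationRing 𝒪]
    (A : Type) [CommRing A] [IsLocalRing A] [IsNoetherianRing A]
    (lam : A →+* 𝒪) (hs : Function.Surjective lam)
    (hfin : OFiniteLength lam hs (RingHom.ker lam).Cotangent
      (conormal_torsion (RingHom.ker lam))) :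
    Submodule.annihilator
      (Submodule.annihilator (RingHom.ker lam) : Ideal A) = RingHom.ker lam := by
  set 𝔭 : Ideal A := RingHom.ker lam with h𝔭
  obtain ⟨t, ht0, htk⟩ := exists_ann lam hs hfin
  have htI : t ∈ (Submodule.annihilator 𝔭 : Ideal A) := by
    rw [Submodule.mem_annihilator]
    intro x hx
    rw [smul_eq_mul]
    exact htk x hx
  apply le_antisymm
  · intro a ha
    rw [Submodule.mem_annihilator] at ha
    have := ha t htI
    rw [smul_eq_mul] at this
    have hz : lam a * lam t = 0 := by rw [← map_mul, this, map_zero]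
    rcases mul_eq_zero.mp hz with h | h
    · exact RingHom.mem_ker.mpr h
    · exact absurd h ht0
  · intro x hx
    rw [Submodule.mem_annihilator]
    intro y hy
    rw [Submodule.mem_annihilator] at hy
    have := hy x hx
    rw [smul_eq_mul] at this ⊢
    rw [mul_comm]
    exact this
end

section
/- Let (A, λ_A) be an object of C_𝒪. Then there is an isomorphism of Ψ_A-modules I_A/I_A² ≅ I_A ⊗_𝒪 Ψ_A, where Ψ_A := 𝒪/λ_A(I_A). -/
open IsLocalRing CategoryTheory

lemma oModule_smul {𝒪 A : Type} [CommRing 𝒪] [CommRing A] (lam : A →+* 𝒪)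
    (hs : Function.Surjective lam) (M : Type) [AddCommGroup M] [Module A M]
    (h : Module.IsTorsionBySet A M (RingHom.ker lam : Set A)) (a : A) (m : M) :
    letI := oModule lam hs M h
    lam a • m = a • m := by
  letI := h.module
  letI := oModule lam hs M h
  show ((RingHom.quotientKerEquivOfSurjective hs).symm (lam a)) • m = a • m
  have : (RingHom.quotientKerEquivOfSurjective hs).symm (lam a)
      = Ideal.Quotient.mk (RingHom.ker lam) a := by
    apply (RingHom.quotientKerEquivOfSurjective hs).injective
    rw [RingEquiv.apply_symm_apply]
    rfl
  rw [this]
  rfl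


/-- For an object `(A, λ_A)` of `C_𝒪`, there is an isomorphism of
`Ψ_A`-modules `I_A/I_A² ≅ I_A ⊗_𝒪 Ψ_A`, where `Ψ_A = 𝒪/λ_A(I_A)`.  (Both sides are
modules over `Ψ_A`, a quotient of `𝒪`; the isomorphism is stated as an `𝒪`-linear
isomorphism, `I_A` being an `𝒪`-module since it is killed by `𝔭_A = ker λ_A`.) -/
theorem statement5
    (𝒪 : Type) [CommRing 𝒪] [IsDomain 𝒪] [IsDiscreteValuationRing 𝒪]
    (A : Type) [CommRing A] [IsLocalRing A] [IsNoetherianRing A]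
    (lam : A →+* 𝒪) (hs : Function.Surjective lam)
    (hfin : OFiniteLength lam hs (RingHom.ker lam).Cotangent
      (conormal_torsion (RingHom.ker lam))) :
    letI : Module 𝒪 (Submodule.annihilator (RingHom.ker lam) : Ideal A) :=
      oModule lam hs _ (annihilator_torsion (RingHom.ker lam))
    letI : Module 𝒪 (Submodule.annihilator (RingHom.ker lam) : Ideal A).Cotangent :=
      oModule lam hs _ (cotangent_torsion (annihilator_torsion (RingHom.ker lam)))
    Nonempty ((Submodule.annihilator (RingHom.ker lam) : Ideal A).Cotangent ≃ₗ[𝒪]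
      TensorProduct 𝒪 (Submodule.annihilator (RingHom.ker lam) : Ideal A)
        (𝒪 ⧸ Ideal.map lam (Submodule.annihilator (RingHom.ker lam)))) := by
  set I : Ideal A := Submodule.annihilator (RingHom.ker lam) with hI
  letI : Module 𝒪 I := oModule lam hs _ (annihilator_torsion (RingHom.ker lam))
  letI : Module 𝒪 I.Cotangent :=
    oModule lam hs _ (cotangent_torsion (annihilator_torsion (RingHom.ker lam)))
  set J : Ideal 𝒪 := Ideal.map lam I with hJ
  have hsmulI : ∀ (a : A) (m : I), lam a • m = a • m :=
    oModule_smul lam hs _ (annihilator_torsion (RingHom.ker lam))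
  have hsmulC : ∀ (a : A) (m : I.Cotangent), lam a • m = a • m :=
    oModule_smul lam hs _ (cotangent_torsion (annihilator_torsion (RingHom.ker lam)))
  -- the 𝒪-linear version of toCotangent
  have gsmul : ∀ (c : 𝒪) (m : I), I.toCotangent (c • m) = c • I.toCotangent m := by
    intro c m
    obtain ⟨a, rfl⟩ := hs c
    rw [hsmulI, map_smul, hsmulC]
  let g : I →ₗ[𝒪] I.Cotangent :=
    { toFun := I.toCotangent
      map_add' := map_add _
      map_smul' := gsmul }
  have hgsurj : Function.Surjective g := I.toCotangent_surjective
  have hclaim : ∀ c ∈ Ideal.span (lam '' (I : Set A)), ∀ m : I, g (c • m) = 0 := by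
    intro c hc
    refine Submodule.span_induction ?_ ?_ ?_ ?_ hc
    · rintro _ ⟨x, hx, rfl⟩ m
      show I.toCotangent (lam x • m) = 0
      rw [hsmulI]
      refine (Ideal.toCotangent_eq_zero _ _).mpr ?_
      have : ((x • m : I) : A) = x * (m : A) := rfl
      rw [this, pow_two]
      exact Ideal.mul_mem_mul hx m.2
    · intro m
      show g ((0 : 𝒪) • m) = 0
      rw [zero_smul, map_zero]
    · intro c d _ _ hc hd m
      show g ((c + d) • m) = 0
      rw [add_smul, map_add, hc m, hd m, add_zero]
    · intro c d _ hd m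
      show g ((c • d) • m) = 0
      rw [smul_eq_mul, mul_smul, map_smul]
      rw [hd m, smul_zero]
  have hker : (J • ⊤ : Submodule 𝒪 I) ≤ LinearMap.ker g := by
    refine Submodule.smul_le.mpr ?_
    intro c hc m _
    rw [LinearMap.mem_ker]
    exact hclaim c (by rwa [hJ, Ideal.map] at hc) m
  have hker' : LinearMap.ker g ≤ (J • ⊤ : Submodule 𝒪 I) := by
    intro m hm
    rw [LinearMap.mem_ker] at hm
    have hm2 : (m : A) ∈ I ^ 2 := (Ideal.toCotangent_eq_zero _ _).mp hm
    rw [pow_two] at hm2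
    have key : ∀ z ∈ I * I, ∃ hz : z ∈ I, (⟨z, hz⟩ : I) ∈ (J • ⊤ : Submodule 𝒪 I) := by
      intro z hz
      refine Submodule.mul_induction_on hz ?_ ?_
      · intro x hx y hy
        refine ⟨I.mul_mem_left x hy, ?_⟩
        have : (⟨x * y, I.mul_mem_left x hy⟩ : I) = lam x • (⟨y, hy⟩ : I) := by
          rw [hsmulI]; rfl
        rw [this]
        exact Submodule.smul_mem_smul (Ideal.mem_map_of_mem lam hx) trivial
      · rintro z w ⟨hz, hz'⟩ ⟨hw, hw'⟩
        refine ⟨I.add_mem hz hw, ?_⟩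
        have : (⟨z + w, I.add_mem hz hw⟩ : I) = ⟨z, hz⟩ + ⟨w, hw⟩ := rfl
        rw [this]
        exact Submodule.add_mem _ hz' hw'
    obtain ⟨hz, hmem⟩ := key _ hm2
    have : (⟨(m : A), hz⟩ : I) = m := Subtype.ext rfl
    rwa [this] at hmem
  let f : (I ⧸ (J • ⊤ : Submodule 𝒪 I)) →ₗ[𝒪] I.Cotangent :=
    Submodule.liftQ _ g hker
  have hfinj : Function.Injective f := by
    rw [← LinearMap.ker_eq_bot]
    exact Submodule.ker_liftQ_eq_bot _ _ _ hker'
  have hfsurj : Function.Surjective f := by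
    intro y
    obtain ⟨m, rfl⟩ := hgsurj y
    exact ⟨Submodule.Quotient.mk m, rfl⟩
  let e1 : (I ⧸ (J • ⊤ : Submodule 𝒪 I)) ≃ₗ[𝒪] I.Cotangent :=
    LinearEquiv.ofBijective f ⟨hfinj, hfsurj⟩
  exact ⟨e1.symm.trans (TensorProduct.tensorQuotEquivQuotSMul I J).symm⟩
end

section
/- Let (A, λ_A) be an object of C_𝒪 with depth A = 1. Then the ideal I_A ⊂ A is principal, I_A is free of rank one as an 𝒪-module, and I_A/I_A² is free of rank one as a Ψ_A-module. -/
open IsLocalRing CategoryTheory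

namespace Statement6Aux

open IsLocalRing

/-- The smul of the `oModule` structure is computed via any lift. -/
lemma oModule_smul {𝒪 A : Type} [CommRing 𝒪] [CommRing A] (lam : A →+* 𝒪)
    (hs : Function.Surjective lam) (M : Type) [AddCommGroup M] [Module A M]
    (h : Module.IsTorsionBySet A M (RingHom.ker lam : Set A)) (a : A) (x : M) :
    letI := oModule lam hs M h
    lam a • x = a • x := by
  letI := h.module
  have h1 : (RingHom.quotientKerEquivOfSurjective hs).symm (lam a)
      = Ideal.Quotient.mk (RingHom.ker lam) a := by
    apply (RingHom.quotientKerEquivOfSurjective hs).injective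
    rw [RingEquiv.apply_symm_apply]
    exact (RingHom.kerLift_mk lam a).symm
  show ((RingHom.quotientKerEquivOfSurjective hs).symm.toRingHom (lam a)) • x = a • x
  rw [RingEquiv.toRingHom_eq_coe, RingEquiv.coe_toRingHom, h1]
  exact Module.IsTorsionBySet.mk_smul h a x

open RingTheory.Sequence in
lemma aux_exists_regular (A : Type) [CommRing A] [IsLocalRing A]
    (hdepth : mDepth A A = 1) :
    ∃ x ∈ maximalIdeal A, IsSMulRegular A x := by
  by_contra hcon
  push_neg at hcon
  have hle : mDepth A A ≤ 0 := by
    unfold mDepth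
    apply sSup_le
    rintro n ⟨rs, hlen, hmem, hreg⟩
    cases rs with
    | nil => exact le_of_eq (by simpa using hlen.symm)
    | cons x t =>
        exact absurd ((isWeaklyRegular_cons_iff A x t).mp hreg.toIsWeaklyRegular).1
          (hcon x (hmem x List.mem_cons_self))
  rw [hdepth] at hle
  simp at hle

lemma aux_nonunit {𝒪 A : Type} [CommRing 𝒪] [Nontrivial 𝒪] [CommRing A] [IsLocalRing A]
    (lam : A →+* 𝒪) (hs : Function.Surjective lam)
    {x : A} (hx : x ∈ maximalIdeal A) : ¬ IsUnit (lam x) := by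
  intro hu
  obtain ⟨d, hd⟩ := hs (↑hu.unit⁻¹)
  have h1 : lam (d * x) = 1 := by
    rw [map_mul, hd]
    exact hu.val_inv_mul
  have hdx : ¬ IsUnit (d * x) := by
    intro h
    exact (mem_maximalIdeal x).mp hx (isUnit_of_mul_isUnit_right h)
  have h2 : d * x ∈ maximalIdeal A := (mem_maximalIdeal _).mpr hdx
  have h3 : (1 : A) - d * x ∈ maximalIdeal A := by
    have hk : lam ((1 : A) - d * x) = 0 := by
      rw [map_sub, h1, map_one, sub_self]
    rw [mem_maximalIdeal, mem_nonunits_iff]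
    intro hu'
    have h6 := hu'.map lam
    rw [hk] at h6
    exact not_isUnit_zero h6
  have : (1 : A) ∈ maximalIdeal A := by
    have h9 := Ideal.add_mem (maximalIdeal A) h3 h2
    simp only [sub_add_cancel] at h9
    exact h9
  exact (mem_maximalIdeal 1).mp this isUnit_one

lemma aux_key {𝒪 A : Type} [CommRing 𝒪] [IsDomain 𝒪] [IsDiscreteValuationRing 𝒪]
    [CommRing A] [IsLocalRing A]
    (lam : A →+* 𝒪) (hs : Function.Surjective lam)
    (x : A) (hx : x ∈ maximalIdeal A) (hxreg : IsSMulRegular A x)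
    (t b : A) (ht : ∀ p ∈ RingHom.ker lam, t * p = 0)
    (hb : lam b ≠ 0) (hbt : b * t = 0) : t = 0 := by
  have hsame : ∀ y z : A, lam y = lam z → y * t = z * t := by
    intro y z h
    have hyz : y - z ∈ RingHom.ker lam := by
      rw [RingHom.mem_ker, map_sub, h, sub_self]
    have h7 : t * (y - z) = 0 := ht _ hyz
    have h8 : (y - z) * t = 0 := by rwa [mul_comm]
    rw [sub_mul] at h8
    exact sub_eq_zero.mp h8
  have hnu : ¬ IsUnit (lam x) := aux_nonunit lam hs hx
  rcases eq_or_ne (lam x) 0 with h0 | h0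
  · have hxt : t * x = 0 := ht x (RingHom.mem_ker.mpr h0)
    refine hxreg ?_
    show x • t = x • 0
    rw [smul_eq_mul, smul_eq_mul, mul_zero, mul_comm, hxt]
  · obtain ⟨ϖ, hϖ⟩ := IsDiscreteValuationRing.exists_irreducible 𝒪
    obtain ⟨m, u, hxu⟩ := IsDiscreteValuationRing.eq_unit_mul_pow_irreducible h0 hϖ
    have hm : m ≠ 0 := by
      rintro rfl
      rw [pow_zero, mul_one] at hxu
      exact hnu (hxu ▸ u.isUnit)
    obtain ⟨k, u', hcu⟩ := IsDiscreteValuationRing.eq_unit_mul_pow_irreducible hb hϖ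
    have hkm : k ≤ m * k := Nat.le_mul_of_pos_left k (Nat.pos_of_ne_zero hm)
    have hd : (lam x)^k = lam b * (↑u'⁻¹ * (↑u)^k * ϖ^(m*k - k)) := by
      rw [hxu, hcu, mul_pow, ← pow_mul]
      have h5 : (u' : 𝒪) * ϖ ^ k * (↑u'⁻¹ * ↑u ^ k * ϖ ^ (m * k - k))
          = ((u' : 𝒪) * ↑u'⁻¹) * (↑u ^ k * (ϖ ^ k * ϖ ^ (m * k - k))) := by ring
      rw [h5, ← pow_add, Nat.add_sub_cancel' hkm, Units.mul_inv, one_mul]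
    obtain ⟨e, he⟩ := hs (↑u'⁻¹ * (↑u)^k * ϖ^(m*k - k))
    have hlameq : lam (x^k) = lam (b * e) := by
      rw [map_pow, map_mul, he, hd]
    have h1 : x^k * t = (b * e) * t := hsame _ _ hlameq
    have h2 : (b * e) * t = 0 := by
      rw [mul_comm b e, mul_assoc, hbt, mul_zero]
    refine (hxreg.pow k) ?_
    show x^k • t = x^k • 0
    rw [smul_eq_mul, smul_eq_mul, mul_zero, h1, h2]

lemma aux_torsion (𝒪 : Type) [CommRing 𝒪] [IsDomain 𝒪] [IsDiscreteValuationRing 𝒪]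
    (M : Type) [AddCommGroup M] [Module 𝒪 M] (hfl : IsFiniteLength 𝒪 M) (x : M) :
    ∃ c : 𝒪, c ≠ 0 ∧ c • x = 0 := by
  obtain ⟨hnoeth, hart⟩ := isFiniteLength_iff_isNoetherian_isArtinian.mp hfl
  by_contra hcon
  push_neg at hcon
  have hinj : Function.Injective (LinearMap.toSpanSingleton 𝒪 M x) := by
    intro c d h
    rw [← sub_eq_zero]
    by_contra hne
    refine hcon _ hne ?_
    have : (c - d) • x = c • x - d • x := sub_smul c d x
    rw [this, show (c • x : M) = d • x from h, sub_self]
  haveI : IsArtinian 𝒪 𝒪 := isArtinian_of_injective _ hinj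
  obtain ⟨ϖ, hϖ⟩ := IsDiscreteValuationRing.exists_irreducible 𝒪
  have hϖ0 : ϖ ≠ 0 := hϖ.ne_zero
  have hmono : ∀ i j : ℕ, i ≤ j →
      (Ideal.span {ϖ ^ j} : Ideal 𝒪) ≤ Ideal.span {ϖ ^ i} := by
    intro i j hij
    rw [Ideal.span_singleton_le_span_singleton]
    exact pow_dvd_pow ϖ hij
  obtain ⟨n, hn⟩ := IsArtinian.monotone_stabilizes
    (⟨fun n => OrderDual.toDual (Ideal.span {ϖ ^ n}),
      fun i j hij => hmono i j hij⟩ : ℕ →o (Submodule 𝒪 𝒪)ᵒᵈ)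
  have heq : (Ideal.span {ϖ ^ n} : Ideal 𝒪) = Ideal.span {ϖ ^ (n+1)} :=
    congrArg OrderDual.ofDual (hn (n+1) (Nat.le_succ n))
  have hdvd : ϖ ^ (n+1) ∣ ϖ ^ n := by
    rw [← Ideal.span_singleton_le_span_singleton, ← heq]
  obtain ⟨r, hr⟩ := hdvd
  have hcalc : ϖ ^ n * 1 = ϖ ^ n * (ϖ * r) := by
    calc ϖ ^ n * 1 = ϖ ^ n := mul_one _
    _ = ϖ ^ (n+1) * r := hr
    _ = ϖ ^ n * (ϖ * r) := by ring
  have h1 : (1 : 𝒪) = ϖ * r := mul_left_cancel₀ (pow_ne_zero n hϖ0) hcalc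
  exact hϖ.not_isUnit (IsUnit.of_mul_eq_one r h1.symm)

lemma aux_CH {𝒪 A : Type} [CommRing 𝒪] [CommRing A] [IsNoetherianRing A]
    (lam : A →+* 𝒪) (a : A)
    (ha : ∀ p ∈ RingHom.ker lam, a * p ∈ (RingHom.ker lam)^2) :
    ∃ (s : A) (n : ℕ), (∀ p ∈ RingHom.ker lam, s * p = 0) ∧ lam s = (lam a) ^ n := by
  haveI : Module.Finite A ↥(RingHom.ker lam) :=
    Module.Finite.iff_fg.mpr (IsNoetherian.noetherian _)
  set P := RingHom.ker lam with hP
  set f : Module.End A ↥P := algebraMap A (Module.End A ↥P) a with hf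
  have hrange : LinearMap.range f ≤ P • (⊤ : Submodule A ↥P) := by
    rintro z ⟨y, rfl⟩
    have hz : f y = a • y := rfl
    have hmem : ((a • y : ↥P) : A) ∈ P ^ 2 := by
      rw [Submodule.coe_smul, smul_eq_mul]
      exact ha (y : A) y.2
    have hker : (a • y : ↥P) ∈ LinearMap.ker P.toCotangent :=
      P.mem_toCotangent_ker.mpr hmem
    rw [hz]
    exact (Submodule.mem_smul_top_iff P P (a • y)).mpr (by rw [smul_eq_mul, ← pow_two]; exact hmem)
  obtain ⟨p, hpm, -, hpc, hp0⟩ :=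
    LinearMap.exists_monic_and_coeff_mem_pow_and_aeval_eq_zero_of_range_le_smul A f P hrange
  refine ⟨p.eval a, p.natDegree, ?_, ?_⟩
  · intro q hq
    have h1 : Polynomial.aeval f p = algebraMap A (Module.End A ↥P) (p.eval a) := by
      rw [hf]
      exact Polynomial.aeval_algebraMap_apply_eq_algebraMap_eval a p
    have h2 : algebraMap A (Module.End A ↥P) (p.eval a) = 0 := by rw [← h1, hp0]
    have h3 : (p.eval a) • (⟨q, hq⟩ : ↥P) = 0 := by
      have := congrArg (fun g : Module.End A ↥P => g ⟨q, hq⟩) h2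
      simpa [Module.algebraMap_end_apply] using this
    have h4 := congrArg (Subtype.val) h3
    rw [Submodule.coe_smul, smul_eq_mul] at h4
    exact h4
  · have h4 : p.map lam = Polynomial.X ^ p.natDegree := by
      ext k
      rw [Polynomial.coeff_map, Polynomial.coeff_X_pow]
      rcases lt_trichotomy k p.natDegree with hk | hk | hk
      · have hco : p.coeff k ∈ P :=
          Ideal.pow_le_self (Nat.sub_ne_zero_of_lt hk) (hpc k)
        rw [RingHom.mem_ker.mp hco, if_neg (Nat.ne_of_lt hk)]
      · rw [hk, if_pos rfl, hpm.coeff_natDegree, map_one]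
      · rw [Polynomial.coeff_eq_zero_of_natDegree_lt hk, map_zero,
          if_neg (Nat.ne_of_gt hk)]
    have h5 : lam (p.eval a) = (p.map lam).eval (lam a) := by
      rw [Polynomial.eval_map, Polynomial.eval₂_hom]
    rw [h5, h4, Polynomial.eval_pow, Polynomial.eval_X]

end Statement6Aux

/-- Let `(A, λ_A)` be an object of `C_𝒪` with `depth A = 1`.  Then the
ideal `I_A = A[𝔭_A]` is principal, `I_A` is free of rank one as an `𝒪`-module, and
`I_A/I_A²` is free of rank one as a `Ψ_A`-module (where `Ψ_A = 𝒪/λ_A(I_A)`);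
the latter two conditions are expressed by `𝒪`-linear isomorphisms `I_A ≅ 𝒪` and
`I_A/I_A² ≅ Ψ_A`. -/
theorem statement6
    (𝒪 : Type) [CommRing 𝒪] [IsDomain 𝒪] [IsDiscreteValuationRing 𝒪]
    (A : Type) [CommRing A] [IsLocalRing A] [IsNoetherianRing A]
    (lam : A →+* 𝒪) (hs : Function.Surjective lam)
    (hfin : OFiniteLength lam hs (RingHom.ker lam).Cotangent
      (conormal_torsion (RingHom.ker lam)))
    (hdepth : mDepth A A = 1) :
    letI : Module 𝒪 (Submodule.annihilator (RingHom.ker lam) : Ideal A) :=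
      oModule lam hs _ (annihilator_torsion (RingHom.ker lam))
    letI : Module 𝒪 (Submodule.annihilator (RingHom.ker lam) : Ideal A).Cotangent :=
      oModule lam hs _ (cotangent_torsion (annihilator_torsion (RingHom.ker lam)))
    (Submodule.annihilator (RingHom.ker lam) : Ideal A).IsPrincipal ∧
    Nonempty ((Submodule.annihilator (RingHom.ker lam) : Ideal A) ≃ₗ[𝒪] 𝒪) ∧
    Nonempty ((Submodule.annihilator (RingHom.ker lam) : Ideal A).Cotangent ≃ₗ[𝒪]
      (𝒪 ⧸ Ideal.map lam (Submodule.annihilator (RingHom.ker lam)))) := by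
  classical
  letI instPhi : Module 𝒪 (RingHom.ker lam).Cotangent :=
    oModule lam hs _ (conormal_torsion (RingHom.ker lam))
  letI instI : Module 𝒪 (Submodule.annihilator (RingHom.ker lam) : Ideal A) :=
    oModule lam hs _ (annihilator_torsion (RingHom.ker lam))
  letI instC : Module 𝒪 (Submodule.annihilator (RingHom.ker lam) : Ideal A).Cotangent :=
    oModule lam hs _ (cotangent_torsion (annihilator_torsion (RingHom.ker lam)))
  obtain ⟨x, hxm, hxreg⟩ := Statement6Aux.aux_exists_regular A hdepth
  have hfin' : IsFiniteLength 𝒪 (RingHom.ker lam).Cotangent := hfin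
  -- the `𝒪`-action on the conormal module computed via lifts
  have hsmulPhi : ∀ (b : A) (z : (RingHom.ker lam).Cotangent), lam b • z = b • z :=
    fun b z => Statement6Aux.oModule_smul lam hs _ (conormal_torsion (RingHom.ker lam)) b z
  have hcommPhi : ∀ (c : 𝒪) (b : A) (z : (RingHom.ker lam).Cotangent),
      c • (b • z) = b • (c • z) := by
    intro c b z
    obtain ⟨e, rfl⟩ := hs c
    rw [hsmulPhi, hsmulPhi, smul_smul, smul_smul, mul_comm]
  haveI : Module.Finite A ↥(RingHom.ker lam) :=
    Module.Finite.iff_fg.mpr (IsNoetherian.noetherian _)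
  haveI : Module.Finite A (RingHom.ker lam).Cotangent :=
    Module.Finite.of_surjective _ (RingHom.ker lam).toCotangent_surjective
  obtain ⟨S, hS⟩ :=
    (Module.Finite.fg_top : (⊤ : Submodule A (RingHom.ker lam).Cotangent).FG)
  choose cf hcf0 hcfx using fun y : (RingHom.ker lam).Cotangent =>
    Statement6Aux.aux_torsion 𝒪 _ hfin' y
  have hc0 : S.prod cf ≠ 0 := Finset.prod_ne_zero_iff.mpr fun y _ => hcf0 y
  have hckill : ∀ z : (RingHom.ker lam).Cotangent, S.prod cf • z = 0 := by
    intro z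
    let N : Submodule A (RingHom.ker lam).Cotangent :=
      { carrier := {w | S.prod cf • w = 0}
        add_mem' := by
          intro u v hu hv
          show S.prod cf • (u + v) = 0
          rw [smul_add, hu, hv, add_zero]
        zero_mem' := smul_zero _
        smul_mem' := by
          intro b w hw
          show S.prod cf • (b • w) = 0
          rw [hcommPhi, hw, smul_zero] }
    have hSN : (S : Set (RingHom.ker lam).Cotangent) ⊆ N := by
      intro y hy
      show S.prod cf • y = 0
      rw [← Finset.prod_erase_mul S cf hy, mul_smul, hcfx y, smul_zero]
    have htop : (⊤ : Submodule A (RingHom.ker lam).Cotangent) ≤ N := by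
      rw [← hS]
      exact Submodule.span_le.mpr hSN
    exact htop (Submodule.mem_top)
  obtain ⟨a, ha⟩ := hs (S.prod cf)
  have haP : ∀ p ∈ RingHom.ker lam, a * p ∈ (RingHom.ker lam) ^ 2 := by
    intro p hp
    have h1 : (RingHom.ker lam).toCotangent (a • ⟨p, hp⟩) = 0 := by
      rw [map_smul, ← hsmulPhi, ha, hckill]
    rw [Ideal.toCotangent_eq_zero] at h1
    simpa using h1
  obtain ⟨s, n, hskill, hsval⟩ := Statement6Aux.aux_CH lam a haP
  have hsne : lam s ≠ 0 := by
    rw [hsval, ha]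
    exact pow_ne_zero n hc0
  have hsI : s ∈ Submodule.annihilator (RingHom.ker lam) :=
    Submodule.mem_annihilator.mpr fun p hp => by
      rw [smul_eq_mul]; exact hskill p hp
  -- `lam` is injective on the annihilator ideal
  have hinj : ∀ t ∈ Submodule.annihilator (RingHom.ker lam), lam t = 0 → t = 0 := by
    intro t htI htl
    refine Statement6Aux.aux_key lam hs x hxm hxreg t s ?_ hsne ?_
    · intro p hp
      have := Submodule.mem_annihilator.mp htI p hp
      rwa [smul_eq_mul] at this
    · exact hskill t (RingHom.mem_ker.mpr htl)
  -- a generator of the image ideal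
  obtain ⟨g, hg⟩ :=
    Submodule.IsPrincipal.principal
      (Ideal.map lam (Submodule.annihilator (RingHom.ker lam)))
  have hsJ : lam s ∈ Ideal.map lam (Submodule.annihilator (RingHom.ker lam)) :=
    Ideal.mem_map_of_mem lam hsI
  have hg' : Ideal.map lam (Submodule.annihilator (RingHom.ker lam)) = Ideal.span {g} := hg
  have hg0 : g ≠ 0 := by
    rintro rfl
    rw [hg'] at hsJ
    have := Ideal.mem_span_singleton.mp hsJ
    exact hsne (zero_dvd_iff.mp this)
  obtain ⟨f, hfI, hfg⟩ : ∃ f, f ∈ Submodule.annihilator (RingHom.ker lam) ∧ lam f = g := by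
    have hgJ : g ∈ Ideal.map lam (Submodule.annihilator (RingHom.ker lam)) := by
      rw [hg']
      exact Ideal.subset_span rfl
    exact (Ideal.mem_map_iff_of_surjective lam hs).mp hgJ
  -- every element of the annihilator is a multiple of `f`
  have hrep : ∀ t ∈ Submodule.annihilator (RingHom.ker lam), ∃ b : A, t = b * f := by
    intro t ht
    have h1 : lam t ∈ Ideal.map lam (Submodule.annihilator (RingHom.ker lam)) :=
      Ideal.mem_map_of_mem lam ht
    rw [hg', Ideal.mem_span_singleton] at h1
    obtain ⟨e, he⟩ := h1
    obtain ⟨b, hb⟩ := hs e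
    refine ⟨b, ?_⟩
    have h2 : t - b * f ∈ Submodule.annihilator (RingHom.ker lam) :=
      Submodule.sub_mem _ ht (Ideal.mul_mem_left _ b hfI)
    have h3 : lam (t - b * f) = 0 := by
      rw [map_sub, map_mul, hb, hfg, he, mul_comm]
      ring
    have := hinj _ h2 h3
    rw [sub_eq_zero] at this
    exact this
  -- the annihilator is principal
  have hprin : (Submodule.annihilator (RingHom.ker lam) : Ideal A) = Ideal.span {f} := by
    apply le_antisymm
    · intro t ht
      obtain ⟨b, rfl⟩ := hrep t ht
      exact Ideal.mem_span_singleton.mpr (dvd_mul_left f b)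
    · rw [Ideal.span_le, Set.singleton_subset_iff]
      exact hfI
  have hsmulI : ∀ (b : A) (z : ↥(Submodule.annihilator (RingHom.ker lam) : Ideal A)),
      lam b • z = b • z :=
    fun b z => Statement6Aux.oModule_smul lam hs _ (annihilator_torsion (RingHom.ker lam)) b z
  have hsmulC : ∀ (b : A) (z : (Submodule.annihilator (RingHom.ker lam) : Ideal A).Cotangent),
      lam b • z = b • z :=
    fun b z => Statement6Aux.oModule_smul lam hs _
      (cotangent_torsion (annihilator_torsion (RingHom.ker lam))) b z
  set fI : ↥(Submodule.annihilator (RingHom.ker lam) : Ideal A) := ⟨f, hfI⟩ with hfIdef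
  -- rank one : the map `c ↦ c • f` is bijective from `𝒪` to the annihilator
  have hinjO : ∀ c : 𝒪, c • fI = 0 → c = 0 := by
    intro c hc
    obtain ⟨b, rfl⟩ := hs c
    rw [hsmulI] at hc
    have h4 : b * f = 0 := by
      have := congrArg Subtype.val hc
      rwa [Submodule.coe_smul, smul_eq_mul] at this
    have h5 : lam b * g = 0 := by
      rw [← hfg, ← map_mul, h4, map_zero]
    rcases mul_eq_zero.mp h5 with h | h
    · exact h
    · exact absurd h hg0
  have hsurjO : ∀ z : ↥(Submodule.annihilator (RingHom.ker lam) : Ideal A),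
      ∃ c : 𝒪, c • fI = z := by
    rintro ⟨t, ht⟩
    obtain ⟨b, hb⟩ := hrep t ht
    refine ⟨lam b, ?_⟩
    rw [hsmulI]
    apply Subtype.ext
    rw [Submodule.coe_smul, smul_eq_mul]
    exact hb.symm
  refine ⟨⟨⟨f, hprin⟩⟩, ?_, ?_⟩
  · -- free of rank one
    have hbij : Function.Bijective (LinearMap.toSpanSingleton 𝒪 _ fI) := by
      constructor
      · intro c d hcd
        rw [← sub_eq_zero]
        apply hinjO
        rw [sub_smul]
        simp only [LinearMap.toSpanSingleton_apply] at hcd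
        rw [hcd, sub_self]
      · intro z
        obtain ⟨c, hc⟩ := hsurjO z
        exact ⟨c, hc⟩
    exact ⟨(LinearEquiv.ofBijective _ hbij).symm⟩
  · -- the cotangent module of the annihilator
    set ψ := LinearMap.toSpanSingleton 𝒪
      (Submodule.annihilator (RingHom.ker lam) : Ideal A).Cotangent
      ((Submodule.annihilator (RingHom.ker lam) : Ideal A).toCotangent fI) with hψ
    have hψapp : ∀ b : A, ψ (lam b) =
        (Submodule.annihilator (RingHom.ker lam) : Ideal A).toCotangent (b • fI) := by
      intro b
      rw [hψ, LinearMap.toSpanSingleton_apply, hsmulC, ← map_smul]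
    have hψsurj : Function.Surjective ψ := by
      intro z
      obtain ⟨y, rfl⟩ := (Submodule.annihilator (RingHom.ker lam) : Ideal A).toCotangent_surjective z
      obtain ⟨t, ht⟩ := y
      obtain ⟨b, hb⟩ := hrep t ht
      refine ⟨lam b, ?_⟩
      rw [hψapp]
      congr 1
      apply Subtype.ext
      rw [Submodule.coe_smul, smul_eq_mul]
      exact hb.symm
    have hsq : (Submodule.annihilator (RingHom.ker lam) : Ideal A) ^ 2 = Ideal.span {f * f} := by
      rw [hprin, pow_two, Ideal.span_singleton_mul_span_singleton]
    have hker : LinearMap.ker ψ = Ideal.map lam (Submodule.annihilator (RingHom.ker lam)) := by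
      rw [hg']
      ext c
      rw [LinearMap.mem_ker]
      constructor
      · intro hc
        obtain ⟨b, rfl⟩ := hs c
        rw [hψapp, Ideal.toCotangent_eq_zero, hsq] at hc
        obtain ⟨r, hr⟩ := Ideal.mem_span_singleton.mp hc
        rw [Submodule.coe_smul, smul_eq_mul] at hr
        have h7 : lam b * g = (g * lam r) * g := by
          have h8 := congrArg lam hr
          rw [map_mul, map_mul, map_mul, hfg] at h8
          rw [h8]; ring
        exact Ideal.mem_span_singleton.mpr ⟨lam r, mul_right_cancel₀ hg0 h7⟩
      · intro hc
        obtain ⟨r, hr⟩ := Ideal.mem_span_singleton.mp hc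
        obtain ⟨br, hbr⟩ := hs r
        have h9 : c = lam (f * br) := by rw [map_mul, hfg, hbr, hr]
        rw [h9, hψapp, Ideal.toCotangent_eq_zero, hsq]
        refine Ideal.mem_span_singleton.mpr ⟨br, ?_⟩
        rw [Submodule.coe_smul, smul_eq_mul]
        ring
    exact ⟨(ψ.quotKerEquivOfSurjective hψsurj).symm.trans
      (Submodule.quotEquivOfEq _ _ hker)⟩
end

section
/- Let (A, λ_A) be an object of C_𝒪 and M a finitely generated A-module with depth_A M ≥ 1. Then M[𝔭_A] and M/M[I_A] are free 𝒪-modules of the same finite rank, and the natural maps give an exact sequence of 𝒪-modules 0 → M[𝔭_A] → M/M[I_A] → Ψ_A(M) → 0. -/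
open IsLocalRing CategoryTheory

section AuxProofs

variable {𝒪 A : Type} [CommRing 𝒪] [CommRing A] (lam : A →+* 𝒪) (hs : Function.Surjective lam)

lemma oModule_smul_eq' {M : Type} [AddCommGroup M] [Module A M]
    (h : Module.IsTorsionBySet A M (RingHom.ker lam : Set A)) (c : 𝒪) (b : A)
    (hb : lam b = c) (x : M) :
    (letI := oModule lam hs M h; c • x) = b • x := by
  letI := h.module
  have hq : (RingHom.quotientKerEquivOfSurjective hs).symm c = Ideal.Quotient.mk _ b := by
    apply (RingHom.quotientKerEquivOfSurjective hs).injective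
    rw [RingEquiv.apply_symm_apply]
    simpa using hb.symm
  show ((RingHom.quotientKerEquivOfSurjective hs).symm c) • x = b • x
  rw [hq]
  exact h.mk_smul b x

lemma oModule_finite' {M : Type} [AddCommGroup M] [Module A M] [Module.Finite A M]
    (h : Module.IsTorsionBySet A M (RingHom.ker lam : Set A)) :
    letI := oModule lam hs M h; Module.Finite 𝒪 M := by
  letI := oModule lam hs M h
  obtain ⟨S, hS⟩ := Module.Finite.fg_top (R := A) (M := M)
  refine ⟨⟨S, ?_⟩⟩
  rw [eq_top_iff]
  intro m _
  have hm : m ∈ Submodule.span A (S : Set M) := by rw [hS]; trivial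
  refine Submodule.span_induction ?_ ?_ ?_ ?_ hm
  · exact fun y hy => Submodule.subset_span hy
  · exact Submodule.zero_mem _
  · exact fun y z _ _ hy hz => Submodule.add_mem _ hy hz
  · intro a y _ hy
    have hsm : (lam a) • y = a • y := oModule_smul_eq' lam hs h (lam a) a rfl y
    rw [← hsm]
    exact Submodule.smul_mem _ _ hy

lemma isFiniteLength_exists_pow_ann {R : Type} [CommRing R] [IsLocalRing R]
    {N : Type} [AddCommGroup N] [Module R N] (h : IsFiniteLength R N) :
    ∃ n : ℕ, ∀ a ∈ IsLocalRing.maximalIdeal R ^ n, ∀ v : N, a • v = 0 := by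
  induction h with
  | of_subsingleton => exact ⟨0, fun a _ v => Subsingleton.elim _ _⟩
  | @of_simple_quotient M iM imM N' iS hN ih =>
    obtain ⟨n, hn⟩ := ih
    haveI := IsSimpleModule.nontrivial R (M ⧸ N')
    have hfg : (⊤ : Submodule R (M ⧸ N')).FG := by
      obtain ⟨y, hy⟩ := exists_ne (0 : M ⧸ N')
      refine ⟨{y}, ?_⟩
      rcases eq_bot_or_eq_top (Submodule.span R ({y} : Set (M ⧸ N'))) with h' | h'
      · exact absurd (h' ▸ Submodule.mem_span_singleton_self y) (by simpa using hy)
      · simpa using h'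
    have hsmul : IsLocalRing.maximalIdeal R • (⊤ : Submodule R (M ⧸ N')) = ⊥ := by
      rcases eq_bot_or_eq_top (IsLocalRing.maximalIdeal R • (⊤ : Submodule R (M ⧸ N')))
        with h' | h'
      · exact h'
      · exfalso
        have := Submodule.eq_bot_of_le_smul_of_le_jacobson_bot (IsLocalRing.maximalIdeal R)
          ⊤ hfg h'.ge (by rw [IsLocalRing.jacobson_eq_maximalIdeal ⊥ bot_ne_top])
        exact absurd this top_ne_bot
    have hsimple : ∀ b ∈ IsLocalRing.maximalIdeal R, ∀ y : M ⧸ N', b • y = 0 := by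
      intro b hb y
      have : b • y ∈ IsLocalRing.maximalIdeal R • (⊤ : Submodule R (M ⧸ N')) :=
        Submodule.smul_mem_smul hb Submodule.mem_top
      rwa [hsmul, Submodule.mem_bot] at this
    refine ⟨n + 1, fun a ha v => ?_⟩
    have hle : IsLocalRing.maximalIdeal R ^ (n + 1) ≤ Module.annihilator R M := by
      rw [pow_succ]
      refine Ideal.mul_le.mpr fun r hr t ht => Module.mem_annihilator.mpr fun m => ?_
      have h2 : t • m ∈ N' := by
        have := hsimple t ht (Submodule.Quotient.mk m)
        rwa [← Submodule.Quotient.mk_smul, Submodule.Quotient.mk_eq_zero] at this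
      have h3 : r • (⟨t • m, h2⟩ : N') = 0 := hn r hr _
      have h4 : r • (t • m) = 0 := congrArg Subtype.val h3
      rw [mul_smul]
      exact h4
    exact Module.mem_annihilator.mp (hle ha) v

lemma dvr_pow_le_span {𝒪' : Type} [CommRing 𝒪'] [IsDomain 𝒪'] [IsDiscreteValuationRing 𝒪']
    {c : 𝒪'} (hc : c ≠ 0) :
    ∃ n : ℕ, IsLocalRing.maximalIdeal 𝒪' ^ n ≤ Ideal.span {c} := by
  obtain ⟨ϖ, hϖ⟩ := IsDiscreteValuationRing.exists_irreducible 𝒪'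
  obtain ⟨n, hn⟩ := IsDiscreteValuationRing.ideal_eq_span_pow_irreducible
    (by simpa using hc : Ideal.span {c} ≠ ⊥) hϖ
  exact ⟨n, by rw [hϖ.maximalIdeal_eq, Ideal.span_singleton_pow, ← hn]⟩

lemma exists_good_annihilator {𝒪 A : Type} [CommRing 𝒪] [IsDomain 𝒪] [CommRing A]
    [IsNoetherianRing A] (lam : A →+* 𝒪) {c : 𝒪} (hc : c ≠ 0) {b : A} (hb : lam b = c)
    (hb2 : ∀ q ∈ RingHom.ker lam, b * q ∈ RingHom.ker lam ^ 2) :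
    ∃ s : A, s ∈ Submodule.annihilator (RingHom.ker lam : Ideal A) ∧ lam s ≠ 0 := by
  set p : Ideal A := RingHom.ker lam with hpdef
  haveI : Module.Finite A ↥p :=
    Module.finite_def.mpr ((Submodule.fg_top p).mpr (IsNoetherian.noetherian p))
  set φ : Module.End A ↥p := Algebra.lsmul A A ↥p b with hφdef
  have hφ : LinearMap.range φ ≤ p • (⊤ : Submodule A ↥p) := by
    rintro _ ⟨q, rfl⟩
    rw [Submodule.mem_smul_top_iff]
    have h1 : ((φ q : ↥p) : A) = b * (q : A) := rfl
    rw [h1]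
    have h2 : p • (p : Submodule A A) = p ^ 2 := by
      rw [Ideal.smul_eq_mul, pow_two]
    rw [h2]
    exact hb2 q q.2
  obtain ⟨pl, hmonic, -, hcoeff, heval⟩ :=
    LinearMap.exists_monic_and_coeff_mem_pow_and_aeval_eq_zero_of_range_le_smul A φ p hφ
  refine ⟨pl.eval b, ?_, ?_⟩
  · rw [Submodule.mem_annihilator]
    intro q hq
    have h5 : Polynomial.aeval φ pl = Algebra.lsmul A A ↥p (Polynomial.aeval b pl) :=
      Polynomial.aeval_algHom_apply (Algebra.lsmul A A ↥p) b pl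
    rw [heval] at h5
    have h6 : Polynomial.aeval b pl = pl.eval b := by
      simp [Polynomial.aeval_def, Polynomial.eval, Polynomial.eval₂_eq_sum,
        Polynomial.eval₂]
    rw [h6] at h5
    have h7 : (pl.eval b) • (⟨q, hq⟩ : ↥p) = 0 := by
      rw [show ((pl.eval b) • (⟨q, hq⟩ : ↥p)) = Algebra.lsmul A A ↥p (pl.eval b) ⟨q, hq⟩ from rfl,
        ← h5]
      rfl
    have h8 := congrArg Subtype.val h7
    simpa using h8
  · set n := pl.natDegree with hndef
    have hval : lam (pl.eval b) = c ^ n := by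
      rw [Polynomial.eval_eq_sum_range, map_sum, Finset.sum_range_succ]
      have hz : ∀ i ∈ Finset.range n, lam (pl.coeff i * b ^ i) = 0 := by
        intro i hi
        rw [map_mul]
        have hmem : pl.coeff i ∈ p :=
          Ideal.pow_le_self (Nat.sub_ne_zero_of_lt (Finset.mem_range.mp hi)) (hcoeff i)
        rw [show lam (pl.coeff i) = 0 from hmem, zero_mul]
      rw [Finset.sum_eq_zero hz, zero_add, map_mul, Polynomial.Monic.coeff_natDegree hmonic,
        map_one, one_mul, map_pow, hb]
    rw [hval]
    exact pow_ne_zero n hc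

lemma exists_regular_of_depth {A : Type} [CommRing A] [IsLocalRing A] {M : Type}
    [AddCommGroup M] [Module A M] (hdepth : 1 ≤ mDepth A M) :
    ∃ x ∈ IsLocalRing.maximalIdeal A, IsSMulRegular M x := by
  by_contra hcon
  push_neg at hcon
  have hle : mDepth A M ≤ 0 := by
    apply sSup_le
    rintro nn ⟨rs, hlen, hmem, hreg⟩
    rcases rs with _ | ⟨x, tl⟩
    · simp only [List.length_nil, Nat.cast_zero] at hlen
      exact hlen ▸ le_rfl
    · exact absurd ((RingTheory.Sequence.isRegular_cons_iff M x tl).mp hreg).1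
        (hcon x (hmem x List.mem_cons_self))
  have := le_trans hdepth hle
  simp at this

end AuxProofs

/-- Let `(A, λ_A)` be an object of `C_𝒪` and `M` a finitely generated
`A`-module with `depth_A M ≥ 1`.  Then `M[𝔭_A]` and `M/M[I_A]` are free `𝒪`-modules
of the same finite rank, and the natural maps form a short exact sequence
`0 → M[𝔭_A] → M/M[I_A] → Ψ_A(M) → 0`, where `Ψ_A(M) = M/(M[𝔭_A] + M[I_A])`. -/
theorem statement7
    (𝒪 : Type) [CommRing 𝒪] [IsDomain 𝒪] [IsDiscreteValuationRing 𝒪]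
    (A : Type) [CommRing A] [IsLocalRing A] [IsNoetherianRing A]
    (lam : A →+* 𝒪) (hs : Function.Surjective lam)
    (hfin : OFiniteLength lam hs (RingHom.ker lam).Cotangent
      (conormal_torsion (RingHom.ker lam)))
    (M : Type) [AddCommGroup M] [Module A M] [Module.Finite A M]
    (hdepth : 1 ≤ mDepth A M) :
    let Mp : Submodule A M := Submodule.torsionBySet A M (RingHom.ker lam)
    let MI : Submodule A M :=
      Submodule.torsionBySet A M (Submodule.annihilator (RingHom.ker lam) : Ideal A)
    letI : Module 𝒪 Mp := oModule lam hs _ (torsionBySet_torsion _)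
    letI : Module 𝒪 (M ⧸ MI) :=
      oModule lam hs _ (quot_tors (RingHom.ker lam) MI le_rfl)
    let f : Mp →ₗ[A] M ⧸ MI := MI.mkQ.comp Mp.subtype
    let g : (M ⧸ MI) →ₗ[A] M ⧸ (Mp ⊔ MI) :=
      Submodule.mapQ MI (Mp ⊔ MI) LinearMap.id (by simp)
    Module.Free 𝒪 Mp ∧ Module.Finite 𝒪 Mp ∧
    Module.Free 𝒪 (M ⧸ MI) ∧ Module.Finite 𝒪 (M ⧸ MI) ∧
    Module.rank 𝒪 Mp = Module.rank 𝒪 (M ⧸ MI) ∧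
    Function.Injective f ∧ Function.Surjective g ∧ LinearMap.range f = LinearMap.ker g := by
  intro Mp MI f g
  classical
  letI instMp : Module 𝒪 ↥Mp := oModule lam hs _ (torsionBySet_torsion _)
  letI instMI : Module 𝒪 (M ⧸ MI) :=
    oModule lam hs _ (quot_tors (RingHom.ker lam) MI le_rfl)
  -- smul bridges
  have smulMp : ∀ (cc : 𝒪) (bb : A), lam bb = cc → ∀ m : Mp, cc • m = bb • m :=
    fun cc bb hbb m => oModule_smul_eq' lam hs _ cc bb hbb m
  have smulQ : ∀ (cc : 𝒪) (bb : A), lam bb = cc → ∀ y : M ⧸ MI, cc • y = bb • y :=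
    fun cc bb hbb y => oModule_smul_eq' lam hs _ cc bb hbb y
  -- a regular element in the maximal ideal
  obtain ⟨x, hxm, hx⟩ := exists_regular_of_depth hdepth
  -- the kernel is contained in the maximal ideal
  have hker_le : RingHom.ker lam ≤ IsLocalRing.maximalIdeal A := by
    intro k hk
    rw [IsLocalRing.mem_maximalIdeal, mem_nonunits_iff]
    intro hu
    have h1 : IsUnit (lam k) := hu.map lam
    rw [RingHom.mem_ker.mp hk] at h1
    exact not_isUnit_zero h1
  -- lam is a local homomorphism
  have hlamx : lam x ∈ IsLocalRing.maximalIdeal 𝒪 := by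
    rw [IsLocalRing.mem_maximalIdeal, mem_nonunits_iff]
    intro hu
    obtain ⟨d, hd⟩ := hs (↑hu.unit⁻¹)
    have h1 : lam (x * d) = 1 := by
      rw [map_mul, hd]
      exact hu.mul_val_inv
    have h2 : (1 : A) - x * d ∈ RingHom.ker lam := by
      rw [RingHom.mem_ker, map_sub, h1, map_one, sub_self]
    have h3 : IsUnit (1 - (1 - x * d)) :=
      IsLocalRing.isUnit_one_sub_self_of_mem_nonunits _
        ((IsLocalRing.mem_maximalIdeal _).mp (hker_le h2))
    rw [sub_sub_cancel] at h3
    exact (IsLocalRing.mem_maximalIdeal _).mp hxm (isUnit_of_mul_isUnit_left h3)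
  -- torsion-freeness of Mp
  have key : ∀ (cc : 𝒪), cc ≠ 0 → ∀ m : Mp, cc • m = 0 → m = 0 := by
    intro cc hcc m hcm
    obtain ⟨n, hn⟩ := dvr_pow_le_span hcc
    obtain ⟨d, hd⟩ := Ideal.mem_span_singleton'.mp (hn (Ideal.pow_mem_pow hlamx n))
    have e1 : (d * cc) • m = (x ^ n) • m := smulMp (d * cc) (x ^ n) (by rw [map_pow, hd]) m
    have e3 : (x ^ n) • m = 0 := by rw [← e1, mul_smul, hcm, smul_zero]
    have e4 : (x ^ n) • (m : M) = 0 := by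
      have := congrArg Subtype.val e3
      simpa using this
    have e5 : (m : M) = 0 := (hx.pow n) (show x ^ n • (m : M) = x ^ n • (0 : M) by
      rw [e4, smul_zero])
    exact Subtype.ext e5
  -- a nonzero annihilator element via finite length of the conormal module
  obtain ⟨ϖ, hϖ⟩ := IsDiscreteValuationRing.exists_irreducible 𝒪
  have hϖm : ϖ ∈ IsLocalRing.maximalIdeal 𝒪 := by
    rw [IsLocalRing.mem_maximalIdeal, mem_nonunits_iff]; exact hϖ.not_isUnit
  letI instΦ := oModule lam hs (RingHom.ker lam).Cotangent (conormal_torsion (RingHom.ker lam))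
  have hfin' : IsFiniteLength 𝒪 (RingHom.ker lam).Cotangent := hfin
  obtain ⟨nP, hnP⟩ := isFiniteLength_exists_pow_ann hfin'
  have hc : (ϖ ^ nP : 𝒪) ≠ 0 := pow_ne_zero _ hϖ.ne_zero
  obtain ⟨b, hb⟩ := hs (ϖ ^ nP)
  have hb2 : ∀ q ∈ RingHom.ker lam, b * q ∈ RingHom.ker lam ^ 2 := by
    intro q hq
    have h0 : (ϖ ^ nP : 𝒪) • ((RingHom.ker lam).toCotangent ⟨q, hq⟩) =
        b • ((RingHom.ker lam).toCotangent ⟨q, hq⟩) :=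
      oModule_smul_eq' lam hs (conormal_torsion (RingHom.ker lam)) _ b hb _
    have h1 : (ϖ ^ nP : 𝒪) • ((RingHom.ker lam).toCotangent ⟨q, hq⟩) = 0 :=
      hnP _ (Ideal.pow_mem_pow hϖm nP) _
    have h2 : (RingHom.ker lam).toCotangent (b • ⟨q, hq⟩) = 0 := by
      rw [map_smul, ← h0, h1]
    have h3 := (Ideal.toCotangent_eq_zero _ _).mp h2
    simpa using h3
  obtain ⟨s, hsann, hsne⟩ := exists_good_annihilator lam hc hb hb2
  -- finiteness instances
  haveI : IsNoetherian A M := isNoetherian_of_isNoetherianRing_of_finite A M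
  haveI finMpA : Module.Finite A ↥Mp :=
    Module.finite_def.mpr ((Submodule.fg_top Mp).mpr (IsNoetherian.noetherian Mp))
  haveI finQA : Module.Finite A (M ⧸ MI) :=
    Module.Finite.of_surjective MI.mkQ (Submodule.mkQ_surjective MI)
  haveI finMpO : Module.Finite 𝒪 ↥Mp := oModule_finite' lam hs _
  haveI finQO : Module.Finite 𝒪 (M ⧸ MI) := oModule_finite' lam hs _
  haveI nzMp : NoZeroSMulDivisors 𝒪 ↥Mp :=
    ⟨fun {cc m} h => or_iff_not_imp_left.mpr fun hcc => key cc hcc m h⟩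
  -- torsion-freeness of M ⧸ MI
  have keyQ : ∀ (cc : 𝒪), cc ≠ 0 → ∀ y : M ⧸ MI, cc • y = 0 → y = 0 := by
    intro cc hcc y hy
    obtain ⟨m, rfl⟩ := Submodule.Quotient.mk_surjective MI y
    obtain ⟨bb, hbb⟩ := hs cc
    have h1 : bb • m ∈ MI := by
      have h2 : bb • (Submodule.Quotient.mk m : M ⧸ MI) = 0 := by
        rw [← smulQ cc bb hbb]; exact hy
      rwa [← Submodule.Quotient.mk_smul, Submodule.Quotient.mk_eq_zero] at h2
    rw [Submodule.Quotient.mk_eq_zero]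
    rw [Submodule.mem_torsionBySet_iff]
    rintro ⟨i, hi⟩
    show i • m = 0
    have hw : i • m ∈ Mp := by
      rw [Submodule.mem_torsionBySet_iff]
      rintro ⟨q, hq⟩
      show q • i • m = 0
      rw [smul_smul]
      have h0' : i • q = 0 := Submodule.mem_annihilator.mp hi q hq
      rw [smul_eq_mul] at h0'
      rw [show q * i = 0 from by rwa [mul_comm], zero_smul]
    have h3 : cc • (⟨i • m, hw⟩ : ↥Mp) = 0 := by
      rw [smulMp cc bb hbb]
      apply Subtype.ext
      show bb • i • m = 0
      rw [smul_comm]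
      exact (Submodule.mem_torsionBySet_iff _ _).mp h1 ⟨i, hi⟩
    exact congrArg Subtype.val (key cc hcc _ h3)
  haveI nzQ : NoZeroSMulDivisors 𝒪 (M ⧸ MI) :=
    ⟨fun {cc y} h => or_iff_not_imp_left.mpr fun hcc => keyQ cc hcc y h⟩
  haveI freeMp : Module.Free 𝒪 ↥Mp := Module.free_of_finite_type_torsion_free'
  haveI freeQ : Module.Free 𝒪 (M ⧸ MI) := Module.free_of_finite_type_torsion_free'
  -- injectivity of f
  have hfinj : Function.Injective f := by
    have h0 : ∀ m : ↥Mp, f m = 0 → m = 0 := by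
      intro m hm
      have hmem : (m : M) ∈ MI := by
        have h1 : Submodule.Quotient.mk (m : M) = (0 : M ⧸ MI) := hm
        rwa [Submodule.Quotient.mk_eq_zero] at h1
      have hsm : s • (m : M) = 0 :=
        (Submodule.mem_torsionBySet_iff _ _).mp hmem ⟨s, hsann⟩
      have h1 : lam s • m = 0 := by
        rw [smulMp (lam s) s rfl]
        exact Subtype.ext hsm
      exact key (lam s) hsne m h1
    intro a b' hab
    have h2 : f (a - b') = 0 := by rw [map_sub, hab, sub_self]
    exact sub_eq_zero.mp (h0 _ h2)
  -- surjectivity of g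
  have hgsurj : Function.Surjective g := by
    intro y
    obtain ⟨m, rfl⟩ := Submodule.Quotient.mk_surjective _ y
    exact ⟨Submodule.Quotient.mk m, rfl⟩
  -- range f = ker g
  have hrange : LinearMap.range f = LinearMap.ker g := by
    apply le_antisymm
    · rintro _ ⟨m, rfl⟩
      rw [LinearMap.mem_ker]
      have h1 : g (f m) = (Submodule.Quotient.mk (m : M) : M ⧸ (Mp ⊔ MI)) := rfl
      rw [h1, Submodule.Quotient.mk_eq_zero]
      exact Submodule.mem_sup_left m.2
    · intro y hy
      obtain ⟨m, rfl⟩ := Submodule.Quotient.mk_surjective MI y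
      rw [LinearMap.mem_ker] at hy
      have hy' : (Submodule.Quotient.mk m : M ⧸ (Mp ⊔ MI)) = 0 := hy
      rw [Submodule.Quotient.mk_eq_zero] at hy'
      obtain ⟨u, hu, v, hv, huv⟩ := Submodule.mem_sup.mp hy'
      refine ⟨⟨u, hu⟩, ?_⟩
      show (Submodule.Quotient.mk u : M ⧸ MI) = Submodule.Quotient.mk m
      rw [Submodule.Quotient.eq]
      have h4 : u - m = -v := by rw [← huv]; abel
      rw [h4]
      exact MI.neg_mem hv
  -- O-linear versions of the comparison maps
  let F : ↥Mp →ₗ[𝒪] (M ⧸ MI) :=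
    { toFun := fun m => f m
      map_add' := fun a b' => map_add f a b'
      map_smul' := by
        intro cc m
        obtain ⟨bb, hbb⟩ := hs cc
        simp only [RingHom.id_apply]
        rw [smulMp cc bb hbb, map_smul, smulQ cc bb hbb] }
  have hsMp : ∀ m : M, s • m ∈ Mp := by
    intro m
    rw [Submodule.mem_torsionBySet_iff]
    rintro ⟨q, hq⟩
    show q • s • m = 0
    rw [smul_smul]
    have h0 : s • q = 0 := Submodule.mem_annihilator.mp hsann q hq
    rw [smul_eq_mul] at h0
    rw [show q * s = 0 from by rwa [mul_comm], zero_smul]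
  let G0 : M →ₗ[A] ↥Mp := LinearMap.codRestrict Mp (LinearMap.lsmul A M s) hsMp
  have hMIker : MI ≤ LinearMap.ker G0 := by
    intro m hm
    rw [LinearMap.mem_ker]
    apply Subtype.ext
    show s • m = 0
    exact (Submodule.mem_torsionBySet_iff _ _).mp hm ⟨s, hsann⟩
  let G1 : (M ⧸ MI) →ₗ[A] ↥Mp := MI.liftQ G0 hMIker
  let G : (M ⧸ MI) →ₗ[𝒪] ↥Mp :=
    { toFun := fun y => G1 y
      map_add' := fun a b' => map_add G1 a b'
      map_smul' := by
        intro cc y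
        obtain ⟨bb, hbb⟩ := hs cc
        simp only [RingHom.id_apply]
        rw [smulQ cc bb hbb, map_smul, smulMp cc bb hbb] }
  have hGinj : Function.Injective G := by
    have h0 : ∀ y : M ⧸ MI, G y = 0 → y = 0 := by
      intro y hy
      obtain ⟨m, rfl⟩ := Submodule.Quotient.mk_surjective MI y
      have hG1 : G (Submodule.Quotient.mk m) = G0 m := rfl
      rw [hG1] at hy
      have hsm : s • m = 0 := by
        have := congrArg Subtype.val hy
        exact this
      rw [Submodule.Quotient.mk_eq_zero]
      rw [Submodule.mem_torsionBySet_iff]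
      rintro ⟨i, hi⟩
      show i • m = 0
      have hw : i • m ∈ Mp := by
        rw [Submodule.mem_torsionBySet_iff]
        rintro ⟨q, hq⟩
        show q • i • m = 0
        rw [smul_smul]
        have h0' : i • q = 0 := Submodule.mem_annihilator.mp hi q hq
        rw [smul_eq_mul] at h0'
        rw [show q * i = 0 from by rwa [mul_comm], zero_smul]
      have h3 : lam s • (⟨i • m, hw⟩ : ↥Mp) = 0 := by
        rw [smulMp (lam s) s rfl]
        apply Subtype.ext
        show s • i • m = 0
        rw [smul_comm, hsm, smul_zero]
      exact congrArg Subtype.val (key (lam s) hsne _ h3)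
    intro y1 y2 h12
    have h1 : G (y1 - y2) = 0 := by rw [map_sub, h12, sub_self]
    exact sub_eq_zero.mp (h0 _ h1)
  exact ⟨freeMp, finMpO, freeQ, finQO,
    le_antisymm (F.rank_le_of_injective (fun a b' h => hfinj h))
      (G.rank_le_of_injective hGinj), hfinj, hgsurj, hrange⟩
end
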